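/- arXiv:1708.09468 — 4 statements merged into one kernel-verified Lean document; each statement's English description precedes it below -/
import Mathlib

section
/- For every integer d ≥ 2 there exists a constant c_d > 0, depending only on d, such that for every integer n1 ≥ 1 with n = n1^d, inf_{θ̃} sup_{θ0 ∈ M(L_{d,n}) ∩ B∞(1)} n^{-1} E‖θ̃(Y) − θ0‖₂² ≥ c_d n^{-1/d}, where the infimum is over all estimators θ̃, i.e. all measurable maps θ̃ : ℝ^{L_{d,n}} → ℝ^{L_{d,n}} applied to the data Y. -/
open MeasureTheory ProbabilityTheory
open scoped ENNReal NNReal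

noncomputable section

/-- The monotone cone `M(L_{d,n})` on the lattice `{1,...,n1}^d`, ordered coordinatewise. -/
def monotoneCone (d n1 : ℕ) : Set ((Fin d → Fin n1) → ℝ) :=
  {θ | ∀ x y : Fin d → Fin n1, x ≤ y → θ x ≤ θ y}

/-- i.i.d. standard Gaussian noise indexed by `ι`. -/
def gaussPi (ι : Type) [Fintype ι] : Measure (ι → ℝ) :=
  Measure.pi fun _ => gaussianReal 0 1

/-- The risk `R(θ̃,θ0) = n⁻¹ E‖θ̃(θ0+ε) − θ0‖₂²` of an arbitrary estimator `θ̃`. -/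
def riskOf (d n1 : ℕ) (est : ((Fin d → Fin n1) → ℝ) → ((Fin d → Fin n1) → ℝ))
    (θ0 : (Fin d → Fin n1) → ℝ) : ℝ≥0∞ :=
  ((n1 ^ d : ℕ) : ℝ≥0∞)⁻¹ *
    ∫⁻ ε, ENNReal.ofReal (∑ w, (est (θ0 + ε) w - θ0 w) ^ 2) ∂(gaussPi (Fin d → Fin n1))

namespace Stmt1Aux

def kc : ℝ := (Real.sqrt (2 * Real.pi))⁻¹ * Real.exp (-2)

lemma kc_pos : 0 < kc := by
  have := Real.pi_pos
  unfold kc; positivity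

lemma gauss_lb {c : ℝ} (hc : |c| ≤ 1) {F : ℝ → ℝ≥0∞} (hF : Measurable F) :
    ENNReal.ofReal kc * ∫⁻ u in Set.Icc (-1:ℝ) 1, F u ≤ ∫⁻ u, F u ∂(gaussianReal c 1) := by
  rw [gaussianReal_of_var_ne_zero c one_ne_zero,
    lintegral_withDensity_eq_lintegral_mul _ (measurable_gaussianPDF c 1) hF]
  calc ENNReal.ofReal kc * ∫⁻ u in Set.Icc (-1:ℝ) 1, F u
      = ∫⁻ u in Set.Icc (-1:ℝ) 1, ENNReal.ofReal kc * F u := (lintegral_const_mul _ hF).symm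
    _ ≤ ∫⁻ u in Set.Icc (-1:ℝ) 1, (gaussianPDF c 1 * F) u := ?_
    _ ≤ ∫⁻ u, (gaussianPDF c 1 * F) u := setLIntegral_le_lintegral _ _
  refine setLIntegral_mono ((measurable_gaussianPDF c 1).mul hF) (fun u hu => ?_)
  refine mul_le_mul_left ?_ _
  rw [gaussianPDF]
  refine ENNReal.ofReal_le_ofReal ?_
  simp only [gaussianPDFReal, NNReal.coe_one, mul_one]
  rw [kc]
  have hu1 : -1 ≤ u := hu.1
  have hu2 : u ≤ 1 := hu.2
  obtain ⟨hc1, hc2⟩ := abs_le.mp hc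
  have h4 : (u - c)^2 ≤ 4 := by nlinarith
  have : Real.exp (-2) ≤ Real.exp (-(u - c)^2 / 2) := by
    apply Real.exp_le_exp.mpr; nlinarith
  have hs : 0 ≤ (Real.sqrt (2 * Real.pi))⁻¹ := by positivity
  calc (Real.sqrt (2 * Real.pi))⁻¹ * Real.exp (-2)
      ≤ (Real.sqrt (2 * Real.pi))⁻¹ * Real.exp (-(u - c)^2 / 2) := by
        exact mul_le_mul_of_nonneg_left this hs
    _ = _ := by norm_num

lemma pair1D {q : ℝ → ℝ} (hq : Measurable q) :
    ENNReal.ofReal (4 * kc) ≤ (∫⁻ u, ENNReal.ofReal ((q u - 1)^2) ∂(gaussianReal 1 1))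
      + ∫⁻ u, ENNReal.ofReal ((q u + 1)^2) ∂(gaussianReal (-1) 1) := by
  have hF1 : Measurable fun u => ENNReal.ofReal ((q u - 1)^2) :=
    ((hq.sub measurable_const).pow_const 2).ennreal_ofReal
  have hF2 : Measurable fun u => ENNReal.ofReal ((q u + 1)^2) :=
    ((hq.add measurable_const).pow_const 2).ennreal_ofReal
  have h1 := gauss_lb (c := 1) (by norm_num) hF1
  have h2 := gauss_lb (c := -1) (by norm_num) hF2
  calc ENNReal.ofReal (4 * kc)
      = ENNReal.ofReal kc * ∫⁻ _ in Set.Icc (-1:ℝ) 1, (2:ℝ≥0∞) := by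
        rw [setLIntegral_const, Real.volume_Icc]
        rw [show (1:ℝ) - (-1) = 2 by norm_num]
        rw [show (4 * kc) = kc * (2 * 2) by ring, ENNReal.ofReal_mul kc_pos.le]
        rw [ENNReal.ofReal_mul (by norm_num : (0:ℝ) ≤ 2)]
        norm_num
    _ ≤ ENNReal.ofReal kc * ∫⁻ u in Set.Icc (-1:ℝ) 1,
          (ENNReal.ofReal ((q u - 1)^2) + ENNReal.ofReal ((q u + 1)^2)) := by
        refine mul_le_mul_right (setLIntegral_mono (hF1.add hF2) (fun u _ => ?_)) _
        refine le_trans ?_ (ENNReal.ofReal_add_le)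
        rw [show (2:ℝ≥0∞) = ENNReal.ofReal 2 by norm_num]
        apply ENNReal.ofReal_le_ofReal; nlinarith [sq_nonneg (q u)]
    _ = (ENNReal.ofReal kc * ∫⁻ u in Set.Icc (-1:ℝ) 1, ENNReal.ofReal ((q u - 1)^2))
          + ENNReal.ofReal kc * ∫⁻ u in Set.Icc (-1:ℝ) 1, ENNReal.ofReal ((q u + 1)^2) := by
        rw [lintegral_add_left hF1, mul_add]
    _ ≤ _ := add_le_add h1 h2


variable {d n1 : ℕ}

def lev (x : Fin d → Fin n1) : ℕ := ∑ j, (x j : ℕ)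

def theta (s : ℕ) (σ : (Fin d → Fin n1) → Bool) (x : Fin d → Fin n1) : ℝ :=
  if lev x < s then -1 else if lev x = s then (if σ x then 1 else -1) else 1

lemma theta_bounds (s : ℕ) (σ : (Fin d → Fin n1) → Bool) (z : Fin d → Fin n1) :
    -1 ≤ theta s σ z ∧ theta s σ z ≤ 1 := by
  simp only [theta]; split_ifs <;> norm_num

lemma lev_strict {x y : Fin d → Fin n1} (h : x ≤ y) (hne : x ≠ y) : lev x < lev y := by
  have hj : ∃ j, x j ≠ y j := by
    by_contra hc; push_neg at hc; exact hne (funext hc)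
  obtain ⟨j, hjne⟩ := hj
  refine Finset.sum_lt_sum (fun i _ => ?_) ⟨j, Finset.mem_univ j, ?_⟩
  · exact h i
  · exact lt_of_le_of_ne (h j) (fun hh => hjne (Fin.val_injective hh))

lemma theta_mem (s : ℕ) (σ : (Fin d → Fin n1) → Bool) :
    ∀ x y : Fin d → Fin n1, x ≤ y → theta s σ x ≤ theta s σ y := by
  intro x y hxy
  rcases eq_or_ne x y with rfl | hne
  · exact le_refl _
  have hl : lev x < lev y := lev_strict hxy hne
  by_cases hx : lev x < s
  · have hx1 : theta s σ x = -1 := by simp only [theta, if_pos hx]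
    rw [hx1]; exact (theta_bounds s σ y).1
  · have hy1 : theta s σ y = 1 := by
      simp only [theta]
      rw [if_neg (by omega), if_neg (by omega)]
    rw [hy1]; exact (theta_bounds s σ x).2

lemma theta_apply_lev (s : ℕ) (σ : (Fin d → Fin n1) → Bool) {a : Fin d → Fin n1}
    (ha : lev a = s) : theta s σ a = if σ a then 1 else -1 := by
  simp only [theta]
  rw [if_neg (by omega), if_pos ha]

lemma theta_update (s : ℕ) (σ : (Fin d → Fin n1) → Bool) (a : Fin d → Fin n1) (b : Bool)
    {x : Fin d → Fin n1} (hx : x ≠ a) :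
    theta s (Function.update σ a b) x = theta s σ x := by
  simp only [theta, Function.update_of_ne hx]

lemma pigeon (hd : 1 ≤ d) (hn1 : 1 ≤ n1) :
    ∃ s, n1 ^ d ≤ (d * n1) *
      (Finset.univ.filter (fun x : Fin d → Fin n1 => lev x = s)).card := by
  have hne : Nonempty (Fin d) := ⟨⟨0, hd⟩⟩
  have hmem : ∀ x : Fin d → Fin n1, x ∈ Finset.univ → lev x ∈ Finset.range (d * n1) := by
    intro x _
    rw [Finset.mem_range]
    calc lev x < ∑ _j : Fin d, n1 :=
          Finset.sum_lt_sum_of_nonempty Finset.univ_nonempty (fun j _ => (x j).isLt)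
      _ = d * n1 := by simp [Finset.sum_const, mul_comm]
  have hcard : ∑ s ∈ Finset.range (d * n1),
      (Finset.univ.filter (fun x : Fin d → Fin n1 => lev x = s)).card = n1 ^ d := by
    rw [← Finset.card_eq_sum_card_fiberwise hmem]
    simp [Finset.card_univ]
  have hrne : (Finset.range (d * n1)).Nonempty := by
    rw [Finset.nonempty_range_iff]
    exact Nat.mul_ne_zero (by omega) (by omega)
  have hle : ∑ _s ∈ Finset.range (d * n1), n1 ^ d ≤ ∑ s ∈ Finset.range (d * n1),
      (d * n1) * (Finset.univ.filter (fun x : Fin d → Fin n1 => lev x = s)).card := by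
    rw [Finset.sum_const, Finset.card_range, smul_eq_mul, ← Finset.mul_sum, hcard]
  obtain ⟨s, _, hs⟩ := Finset.exists_le_of_sum_le hrne hle
  exact ⟨s, hs⟩


lemma const_le_lintegral {α : Type*} [MeasurableSpace α] (μ : Measure α)
    [IsProbabilityMeasure μ] {c : ℝ≥0∞} {g : α → ℝ≥0∞} (h : ∀ y, c ≤ g y) :
    c ≤ ∫⁻ y, g y ∂μ := by
  calc c = ∫⁻ _, c ∂μ := by rw [lintegral_const, measure_univ, mul_one]
    _ ≤ _ := lintegral_mono h

lemma meas_f (est : ((Fin d → Fin n1) → ℝ) → ((Fin d → Fin n1) → ℝ)) (hest : Measurable est)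
    (θ : (Fin d → Fin n1) → ℝ) (a : Fin d → Fin n1) :
    Measurable fun ε : (Fin d → Fin n1) → ℝ => ENNReal.ofReal ((est (θ + ε) a - θ a)^2) := by
  have h0 : Measurable fun ε : (Fin d → Fin n1) → ℝ => θ + ε :=
    measurable_const.add measurable_id
  exact ((((measurable_pi_apply a).comp hest).comp h0).sub measurable_const).pow_const 2
    |>.ennreal_ofReal

lemma keypt (s : ℕ) (est : ((Fin d → Fin n1) → ℝ) → ((Fin d → Fin n1) → ℝ))
    (hest : Measurable est) {a : Fin d → Fin n1} (ha : lev a = s)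
    (σ : (Fin d → Fin n1) → Bool) (z : (Fin d → Fin n1) → ℝ) :
    ENNReal.ofReal (4 * kc) ≤
      (∫⁻ t, ENNReal.ofReal ((est (theta s σ + Function.update z a t) a
          - theta s σ a)^2) ∂gaussianReal 0 1)
      + ∫⁻ t, ENNReal.ofReal ((est (theta s (Function.update σ a (!σ a)) + Function.update z a t) a
          - theta s (Function.update σ a (!σ a)) a)^2) ∂gaussianReal 0 1 := by
  classical
  set σ' := Function.update σ a (!σ a) with hσ'
  set q : ℝ → ℝ := fun u => est (Function.update (theta s σ + z) a u) a with hqdef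
  have hqm : Measurable q := ((measurable_pi_apply a).comp hest).comp (measurable_update _)
  have key1 : ∀ (τ : (Fin d → Fin n1) → Bool) (t : ℝ), theta s τ + Function.update z a t
      = Function.update (theta s τ + z) a (theta s τ a + t) := by
    intro τ t; funext w
    by_cases hw : w = a
    · subst hw; simp
    · simp [Function.update_of_ne hw]
  have key2 : ∀ u : ℝ, Function.update (theta s σ' + z) a u
      = Function.update (theta s σ + z) a u := by
    intro u; funext w
    by_cases hw : w = a
    · subst hw; simp
    · simp only [Function.update_of_ne hw, Pi.add_apply, hσ', theta_update s σ a _ hw]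
  have gen : ∀ c : ℝ, (∫⁻ t, ENNReal.ofReal ((q (c + t) - c)^2) ∂gaussianReal 0 1)
      = ∫⁻ u, ENNReal.ofReal ((q u - c)^2) ∂gaussianReal c 1 := by
    intro c
    have hF : Measurable fun u => ENNReal.ofReal ((q u - c)^2) :=
      ((hqm.sub measurable_const).pow_const 2).ennreal_ofReal
    have hmap : gaussianReal c 1 = (gaussianReal 0 1).map (c + ·) := by
      rw [gaussianReal_map_const_add, zero_add]
    rw [hmap, lintegral_map hF (measurable_const_add c)]
  have t1 : (∫⁻ t, ENNReal.ofReal ((est (theta s σ + Function.update z a t) a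
        - theta s σ a)^2) ∂gaussianReal 0 1)
      = ∫⁻ u, ENNReal.ofReal ((q u - theta s σ a)^2) ∂gaussianReal (theta s σ a) 1 := by
    rw [← gen (theta s σ a)]
    refine lintegral_congr (fun t => ?_)
    rw [key1 σ t, hqdef]
  have t2 : (∫⁻ t, ENNReal.ofReal ((est (theta s σ' + Function.update z a t) a
        - theta s σ' a)^2) ∂gaussianReal 0 1)
      = ∫⁻ u, ENNReal.ofReal ((q u - theta s σ' a)^2) ∂gaussianReal (theta s σ' a) 1 := by
    rw [← gen (theta s σ' a)]
    refine lintegral_congr (fun t => ?_)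
    rw [key1 σ' t, key2, hqdef]
  rw [t1, t2]
  have hv : theta s σ a = if σ a then 1 else -1 := theta_apply_lev s σ ha
  have hv' : theta s σ' a = if σ a then -1 else 1 := by
    rw [theta_apply_lev s σ' ha, hσ', Function.update_self]
    cases σ a <;> simp
  cases hb : σ a
  · rw [hv, hv']; simp only [hb, if_false, if_true, Bool.false_eq_true]
    simp only [sub_neg_eq_add]
    rw [add_comm]
    exact pair1D hqm
  · rw [hv, hv']; simp only [hb, if_true]
    simp only [sub_neg_eq_add]
    exact pair1D hqm


lemma pair_bound (s : ℕ) (est : ((Fin d → Fin n1) → ℝ) → ((Fin d → Fin n1) → ℝ))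
    (hest : Measurable est) {a : Fin d → Fin n1} (ha : lev a = s)
    (σ : (Fin d → Fin n1) → Bool) :
    ENNReal.ofReal (4 * kc) ≤
      (∫⁻ ε, ENNReal.ofReal ((est (theta s σ + ε) a - theta s σ a)^2)
          ∂gaussPi (Fin d → Fin n1))
      + ∫⁻ ε, ENNReal.ofReal ((est (theta s (Function.update σ a (!σ a)) + ε) a
          - theta s (Function.update σ a (!σ a)) a)^2) ∂gaussPi (Fin d → Fin n1) := by
  classical
  set σ' := Function.update σ a (!σ a) with hσ'
  set f : ((Fin d → Fin n1) → Bool) → ((Fin d → Fin n1) → ℝ) → ℝ≥0∞ :=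
    fun τ ε => ENNReal.ofReal ((est (theta s τ + ε) a - theta s τ a)^2) with hf
  have hm : ∀ τ, Measurable (f τ) := fun τ => meas_f est hest _ a
  have hrw : ∀ τ, (∫⁻ ε, f τ ε ∂gaussPi (Fin d → Fin n1)) =
      (∫⋯∫⁻_(Finset.univ.erase a),
        (fun x => ∫⁻ t, f τ (Function.update x a t) ∂gaussianReal 0 1)
        ∂(fun _ => gaussianReal 0 1)) 0 := by
    intro τ
    unfold gaussPi
    rw [lintegral_eq_lmarginal_univ (0 : (Fin d → Fin n1) → ℝ),
      lmarginal_erase' _ (hm τ) (Finset.mem_univ a)]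
  have hGm : ∀ τ, Measurable fun x => ∫⁻ t, f τ (Function.update x a t) ∂gaussianReal 0 1 := by
    intro τ
    have := Measurable.lmarginal (μ := fun _ : Fin d → Fin n1 => gaussianReal 0 1)
      (s := {a}) (hm τ)
    rwa [lmarginal_singleton] at this
  rw [hrw σ, hrw σ']
  simp only [lmarginal]
  have hcomp : Measurable fun y : {x // x ∈ Finset.univ.erase a} → ℝ =>
      ∫⁻ t, f σ (Function.update
        (Function.updateFinset (0 : (Fin d → Fin n1) → ℝ) (Finset.univ.erase a) y) a t)
        ∂gaussianReal 0 1 := (hGm σ).comp measurable_updateFinset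
  rw [← lintegral_add_left hcomp]
  exact const_le_lintegral _ (fun y => keypt s est hest ha σ _)

lemma sum_bound (s : ℕ) (est : ((Fin d → Fin n1) → ℝ) → ((Fin d → Fin n1) → ℝ))
    (hest : Measurable est) {a : Fin d → Fin n1} (ha : lev a = s) :
    (Fintype.card ((Fin d → Fin n1) → Bool) : ℝ≥0∞) * ENNReal.ofReal (2 * kc) ≤
      ∑ σ : (Fin d → Fin n1) → Bool,
        ∫⁻ ε, ENNReal.ofReal ((est (theta s σ + ε) a - theta s σ a)^2)
          ∂gaussPi (Fin d → Fin n1) := by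
  classical
  set h : ((Fin d → Fin n1) → Bool) → ℝ≥0∞ := fun σ =>
    ∫⁻ ε, ENNReal.ofReal ((est (theta s σ + ε) a - theta s σ a)^2)
      ∂gaussPi (Fin d → Fin n1) with hh
  set τ : ((Fin d → Fin n1) → Bool) → ((Fin d → Fin n1) → Bool) :=
    fun σ => Function.update σ a (!σ a) with hτ
  have hinv : Function.Involutive τ := by
    intro σ; funext w
    by_cases hw : w = a
    · subst hw; simp [hτ]
    · simp [hτ, Function.update_of_ne hw]
  have hbij : Function.Bijective τ := hinv.bijective
  have hflip : ∑ σ, h (τ σ) = ∑ σ, h σ :=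
    Fintype.sum_bijective τ hbij _ _ (fun σ => rfl)
  have hpair : ∀ σ, ENNReal.ofReal (4 * kc) ≤ h σ + h (τ σ) := fun σ =>
    pair_bound s est hest ha σ
  have hsum : (Fintype.card ((Fin d → Fin n1) → Bool) : ℝ≥0∞) * ENNReal.ofReal (4 * kc)
      ≤ ∑ σ, (h σ + h (τ σ)) := by
    calc (Fintype.card ((Fin d → Fin n1) → Bool) : ℝ≥0∞) * ENNReal.ofReal (4 * kc)
        = ∑ _σ : (Fin d → Fin n1) → Bool, ENNReal.ofReal (4 * kc) := by
          rw [Finset.sum_const, Finset.card_univ, nsmul_eq_mul]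
      _ ≤ _ := Finset.sum_le_sum (fun σ _ => hpair σ)
  rw [Finset.sum_add_distrib, hflip] at hsum
  have h2 : (Fintype.card ((Fin d → Fin n1) → Bool) : ℝ≥0∞) * ENNReal.ofReal (4 * kc)
      = 2 * ((Fintype.card ((Fin d → Fin n1) → Bool) : ℝ≥0∞) * ENNReal.ofReal (2 * kc)) := by
    rw [show (4 : ℝ) * kc = 2 * (2 * kc) by ring, ENNReal.ofReal_mul (by norm_num : (0:ℝ) ≤ 2)]
    rw [show ENNReal.ofReal 2 = 2 by norm_num]
    ring
  rw [h2, show (∑ σ, h σ) + ∑ σ, h σ = 2 * ∑ σ, h σ by ring] at hsum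
  exact (ENNReal.mul_le_mul_iff_right (by norm_num) (by norm_num)).mp hsum


lemma risk_bound (s : ℕ) (est : ((Fin d → Fin n1) → ℝ) → ((Fin d → Fin n1) → ℝ))
    (hest : Measurable est) :
    ((n1 ^ d : ℕ) : ℝ≥0∞)⁻¹ *
      ((Finset.univ.filter (fun x : Fin d → Fin n1 => lev x = s)).card : ℝ≥0∞) *
      ENNReal.ofReal (2 * kc)
    ≤ ⨆ θ0 ∈ monotoneCone d n1, ⨆ _ : ∀ w, |θ0 w| ≤ 1, riskOf d n1 est θ0 := by
  classical
  set S := ⨆ θ0 ∈ monotoneCone d n1, ⨆ _ : ∀ w, |θ0 w| ≤ 1, riskOf d n1 est θ0 with hS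
  set A := Finset.univ.filter (fun x : Fin d → Fin n1 => lev x = s) with hA
  set C := Fintype.card ((Fin d → Fin n1) → Bool) with hC
  have hup : ∀ σ, riskOf d n1 est (theta s σ) ≤ S := by
    intro σ
    have h1 : riskOf d n1 est (theta s σ)
        ≤ ⨆ _ : ∀ w, |theta s σ w| ≤ 1, riskOf d n1 est (theta s σ) :=
      le_iSup (fun _ => riskOf d n1 est (theta s σ))
        (fun w => abs_le.mpr (theta_bounds s σ w))
    have h2 : (⨆ _ : ∀ w, |theta s σ w| ≤ 1, riskOf d n1 est (theta s σ))
        ≤ ⨆ _ : theta s σ ∈ monotoneCone d n1,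
            ⨆ _ : ∀ w, |theta s σ w| ≤ 1, riskOf d n1 est (theta s σ) :=
      le_iSup (fun _ : theta s σ ∈ monotoneCone d n1 =>
        ⨆ _ : ∀ w, |theta s σ w| ≤ 1, riskOf d n1 est (theta s σ)) (theta_mem s σ)
    refine le_trans h1 (le_trans h2 ?_)
    exact le_iSup (fun θ0 => ⨆ _ : θ0 ∈ monotoneCone d n1,
      ⨆ _ : ∀ w, |θ0 w| ≤ 1, riskOf d n1 est θ0) (theta s σ)
  have hsum_up : ∑ σ : (Fin d → Fin n1) → Bool, riskOf d n1 est (theta s σ)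
      ≤ (C : ℝ≥0∞) * S := by
    calc ∑ σ : (Fin d → Fin n1) → Bool, riskOf d n1 est (theta s σ)
        ≤ ∑ _σ : (Fin d → Fin n1) → Bool, S := Finset.sum_le_sum (fun σ _ => hup σ)
      _ = (C : ℝ≥0∞) * S := by rw [Finset.sum_const, Finset.card_univ, nsmul_eq_mul]
  have hlow : ∀ σ, ((n1 ^ d : ℕ) : ℝ≥0∞)⁻¹ * ∑ a ∈ A,
      (∫⁻ ε, ENNReal.ofReal ((est (theta s σ + ε) a - theta s σ a)^2)
        ∂gaussPi (Fin d → Fin n1)) ≤ riskOf d n1 est (theta s σ) := by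
    intro σ
    unfold riskOf
    refine mul_le_mul_right ?_ _
    rw [← lintegral_finset_sum _ (fun a _ => meas_f est hest (theta s σ) a)]
    refine lintegral_mono (fun ε => ?_)
    calc ∑ a ∈ A, ENNReal.ofReal ((est (theta s σ + ε) a - theta s σ a)^2)
        = ENNReal.ofReal (∑ a ∈ A, (est (theta s σ + ε) a - theta s σ a)^2) :=
          (ENNReal.ofReal_sum_of_nonneg (fun i _ => sq_nonneg _)).symm
      _ ≤ ENNReal.ofReal (∑ w, (est (theta s σ + ε) w - theta s σ w)^2) :=
          ENNReal.ofReal_le_ofReal (Finset.sum_le_sum_of_subset_of_nonneg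
            (Finset.subset_univ A) (fun i _ _ => sq_nonneg _))
  have main : (C : ℝ≥0∞) * (((n1 ^ d : ℕ) : ℝ≥0∞)⁻¹ * (A.card : ℝ≥0∞)
      * ENNReal.ofReal (2 * kc)) ≤ (C : ℝ≥0∞) * S := by
    calc (C : ℝ≥0∞) * (((n1 ^ d : ℕ) : ℝ≥0∞)⁻¹ * (A.card : ℝ≥0∞) * ENNReal.ofReal (2 * kc))
        = ((n1 ^ d : ℕ) : ℝ≥0∞)⁻¹ * ∑ _a ∈ A, ((C : ℝ≥0∞) * ENNReal.ofReal (2 * kc)) := by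
          rw [Finset.sum_const, nsmul_eq_mul]; ring
      _ ≤ ((n1 ^ d : ℕ) : ℝ≥0∞)⁻¹ * ∑ a ∈ A, ∑ σ : (Fin d → Fin n1) → Bool,
            (∫⁻ ε, ENNReal.ofReal ((est (theta s σ + ε) a - theta s σ a)^2)
              ∂gaussPi (Fin d → Fin n1)) := by
          refine mul_le_mul_right (Finset.sum_le_sum (fun a haA => ?_)) _
          exact sum_bound s est hest ((Finset.mem_filter.mp haA).2)
      _ = ∑ σ : (Fin d → Fin n1) → Bool, ((n1 ^ d : ℕ) : ℝ≥0∞)⁻¹ * ∑ a ∈ A,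
            (∫⁻ ε, ENNReal.ofReal ((est (theta s σ + ε) a - theta s σ a)^2)
              ∂gaussPi (Fin d → Fin n1)) := by
          rw [Finset.sum_comm, Finset.mul_sum]
      _ ≤ ∑ σ : (Fin d → Fin n1) → Bool, riskOf d n1 est (theta s σ) :=
          Finset.sum_le_sum (fun σ _ => hlow σ)
      _ ≤ (C : ℝ≥0∞) * S := hsum_up
  have hC0 : (C : ℝ≥0∞) ≠ 0 := Nat.cast_ne_zero.mpr Fintype.card_ne_zero
  have hCt : (C : ℝ≥0∞) ≠ ⊤ := ENNReal.natCast_ne_top _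
  exact (ENNReal.mul_le_mul_iff_right hC0 hCt).mp main

end Stmt1Aux

/-- for every `d ≥ 2` there is `c_d > 0` such that for every `n1 ≥ 1` with
`n = n1 ^ d`, every measurable estimator `θ̃` satisfies
`sup_{θ0 ∈ M(L_{d,n}) ∩ B∞(1)} R(θ̃,θ0) ≥ c_d n^{-1/d}`. -/
theorem stmt1 :
    ∀ d : ℕ, 2 ≤ d → ∃ c : ℝ, 0 < c ∧ ∀ n1 : ℕ, 1 ≤ n1 →
      ∀ est : ((Fin d → Fin n1) → ℝ) → ((Fin d → Fin n1) → ℝ), Measurable est →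
        ENNReal.ofReal (c * ((n1 ^ d : ℕ) : ℝ) ^ (-(1 : ℝ) / d)) ≤
          ⨆ θ0 ∈ monotoneCone d n1, ⨆ _ : ∀ w, |θ0 w| ≤ 1, riskOf d n1 est θ0 := by
  intro d hd
  have hdR : (2:ℝ) ≤ (d:ℝ) := by exact_mod_cast hd
  refine ⟨2 * Stmt1Aux.kc / d, div_pos (by linarith [Stmt1Aux.kc_pos]) (by linarith), ?_⟩
  intro n1 hn1 est hest
  obtain ⟨s, hs⟩ := Stmt1Aux.pigeon (d := d) (n1 := n1) (by omega) hn1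
  refine le_trans ?_ (Stmt1Aux.risk_bound s est hest)
  set A := Finset.univ.filter (fun x : Fin d → Fin n1 => Stmt1Aux.lev x = s) with hA
  have hn1R : (0:ℝ) < n1 := by exact_mod_cast hn1
  have hrpow : ((n1 ^ d : ℕ) : ℝ) ^ (-(1:ℝ)/d) = ((n1:ℝ))⁻¹ := by
    push_cast
    rw [← Real.rpow_natCast (n1:ℝ) d, ← Real.rpow_mul hn1R.le]
    rw [show (d:ℝ) * (-(1:ℝ)/d) = -1 by field_simp]
    exact Real.rpow_neg_one _
  rw [hrpow]
  have hgoal : ENNReal.ofReal (2 * Stmt1Aux.kc / d * (n1:ℝ)⁻¹)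
      = ENNReal.ofReal (2 * Stmt1Aux.kc) * (((d * n1 : ℕ)) : ℝ≥0∞)⁻¹ := by
    rw [show (2 * Stmt1Aux.kc / d * (n1:ℝ)⁻¹) = (2 * Stmt1Aux.kc) * ((d:ℝ) * n1)⁻¹ by
      rw [mul_inv]; ring]
    rw [ENNReal.ofReal_mul (by linarith [Stmt1Aux.kc_pos])]
    congr 1
    rw [ENNReal.ofReal_inv_of_pos (by positivity)]
    congr 1
    rw [← ENNReal.ofReal_natCast (d * n1)]
    push_cast
    ring_nf
  rw [hgoal]
  have hn0 : ((n1 ^ d : ℕ) : ℝ≥0∞) ≠ 0 := by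
    rw [Nat.cast_ne_zero]
    exact pow_ne_zero _ (by omega)
  have hnt : ((n1 ^ d : ℕ) : ℝ≥0∞) ≠ ⊤ := ENNReal.natCast_ne_top _
  have hdn0 : ((d * n1 : ℕ) : ℝ≥0∞) ≠ 0 := by
    rw [Nat.cast_ne_zero]
    exact Nat.mul_ne_zero (by omega) (by omega)
  have hdnt : ((d * n1 : ℕ) : ℝ≥0∞) ≠ ⊤ := ENNReal.natCast_ne_top _
  have hsE : ((n1 ^ d : ℕ) : ℝ≥0∞) ≤ ((d * n1 : ℕ) : ℝ≥0∞) * (A.card : ℝ≥0∞) := by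
    rw [← Nat.cast_mul]
    exact_mod_cast hs
  have hkey : (((d * n1 : ℕ)) : ℝ≥0∞)⁻¹ ≤ ((n1 ^ d : ℕ) : ℝ≥0∞)⁻¹ * (A.card : ℝ≥0∞) := by
    rw [← ENNReal.mul_le_mul_iff_left hn0 hnt]
    have hrhs : ((n1 ^ d : ℕ) : ℝ≥0∞)⁻¹ * (A.card : ℝ≥0∞) * ((n1 ^ d : ℕ) : ℝ≥0∞)
        = (A.card : ℝ≥0∞) := by
      rw [mul_comm (((n1 ^ d : ℕ) : ℝ≥0∞))⁻¹ _, mul_assoc,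
        ENNReal.inv_mul_cancel hn0 hnt, mul_one]
    rw [hrhs]
    calc ((d * n1 : ℕ) : ℝ≥0∞)⁻¹ * ((n1 ^ d : ℕ) : ℝ≥0∞)
        ≤ ((d * n1 : ℕ) : ℝ≥0∞)⁻¹ * (((d * n1 : ℕ) : ℝ≥0∞) * (A.card : ℝ≥0∞)) :=
          mul_le_mul_right hsE _
      _ = (A.card : ℝ≥0∞) := by
          rw [← mul_assoc, ENNReal.inv_mul_cancel hdn0 hdnt, one_mul]
  calc ENNReal.ofReal (2 * Stmt1Aux.kc) * (((d * n1 : ℕ)) : ℝ≥0∞)⁻¹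
      ≤ ENNReal.ofReal (2 * Stmt1Aux.kc) * (((n1 ^ d : ℕ) : ℝ≥0∞)⁻¹ * (A.card : ℝ≥0∞)) :=
        mul_le_mul_right hkey _
    _ = ((n1 ^ d : ℕ) : ℝ≥0∞)⁻¹ * (A.card : ℝ≥0∞) * ENNReal.ofReal (2 * Stmt1Aux.kc) := by
        ring


end
end

section
/- Let d ≥ 1 and suppose n1 = n^{1/d} is a positive integer. For a bounded block increasing function f ∈ F_d, define f_L(x_1,...,x_d) := f(⌊n1 x_1⌋/n1, ..., ⌊n1 x_d⌋/n1) and f_U(x_1,...,x_d) := f(⌈n1 x_1⌉/n1, ..., ⌈n1 x_d⌉/n1). Then ∫_{[0,1]^d} (f_U − f_L)² dx ≤ 4 d n^{−1/d} ‖f‖∞², where ‖f‖∞ = sup_{x ∈ [0,1]^d} |f(x)| and the integral is with respect to Lebesgue measure. -/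
open MeasureTheory
open scoped ENNReal NNReal

noncomputable section

/-- The unit cube `[0,1]^d`. -/
def cube (d : ℕ) : Set (Fin d → ℝ) := Set.univ.pi fun _ => Set.Icc (0 : ℝ) 1

/-- Block increasing functions on `[0,1]^d` (the class `F_d`). -/
def BlockInc (d : ℕ) (f : (Fin d → ℝ) → ℝ) : Prop :=
  ∀ x y : Fin d → ℝ, x ∈ cube d → y ∈ cube d → x ≤ y → f x ≤ f y

namespace Stmt15Aux

def phi (t : ℝ) : ℝ := max 0 (min t 1)

lemma phi_mem (t : ℝ) : phi t ∈ Set.Icc (0:ℝ) 1 :=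
  ⟨le_max_left _ _, max_le (by norm_num) (min_le_right _ _)⟩

lemma phi_eq {t : ℝ} (ht : t ∈ Set.Icc (0:ℝ) 1) : phi t = t := by
  rw [phi, min_eq_left ht.2, max_eq_right ht.1]

def gridF (n1 : ℕ) (s : ℝ) : ℝ := ((⌊(n1:ℝ) * phi s⌋ : ℤ) : ℝ)/n1
def gridC (n1 : ℕ) (s : ℝ) : ℝ := ((⌈(n1:ℝ) * phi s⌉ : ℤ) : ℝ)/n1

lemma grid_facts {n1 : ℕ} (hn1 : 1 ≤ n1) (s : ℝ) :
    gridF n1 s ∈ Set.Icc (0:ℝ) 1 ∧ gridC n1 s ∈ Set.Icc (0:ℝ) 1 ∧ gridF n1 s ≤ gridC n1 s := by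
  have hn1R : (0:ℝ) < n1 := by exact_mod_cast Nat.pos_of_ne_zero (by omega)
  have hp := phi_mem s
  have h0 : (0:ℝ) ≤ (n1:ℝ) * phi s := mul_nonneg hn1R.le hp.1
  have h1 : (n1:ℝ) * phi s ≤ n1 := by nlinarith [hp.2]
  have hf0 : (0:ℤ) ≤ ⌊(n1:ℝ) * phi s⌋ := Int.floor_nonneg.2 h0
  have hc1 : ⌈(n1:ℝ) * phi s⌉ ≤ (n1:ℤ) := Int.ceil_le.2 (by exact_mod_cast h1)
  have hfc : ⌊(n1:ℝ) * phi s⌋ ≤ ⌈(n1:ℝ) * phi s⌉ := Int.floor_le_ceil _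
  refine ⟨⟨?_, ?_⟩, ⟨?_, ?_⟩, ?_⟩
  · apply div_nonneg _ hn1R.le; exact_mod_cast hf0
  · rw [gridF, div_le_one hn1R]; exact_mod_cast le_trans hfc hc1
  · apply div_nonneg _ hn1R.le; exact_mod_cast le_trans hf0 hfc
  · rw [gridC, div_le_one hn1R]; exact_mod_cast hc1
  · rw [gridF, gridC]
    gcongr
  
def vv (d n1 k : ℕ) (x : Fin d → ℝ) : Fin d → ℝ :=
  fun i => if (i:ℕ) < k then gridC n1 (x i) else gridF n1 (x i)

lemma vv_mem_cube {d n1 : ℕ} (hn1 : 1 ≤ n1) (k : ℕ) (x : Fin d → ℝ) :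
    vv d n1 k x ∈ cube d := by
  intro i _
  rw [vv]
  split
  · exact (grid_facts hn1 (x i)).2.1
  · exact (grid_facts hn1 (x i)).1

lemma vv_mono {d n1 : ℕ} (hn1 : 1 ≤ n1) {k k' : ℕ} (hkk : k ≤ k') (x : Fin d → ℝ) :
    vv d n1 k x ≤ vv d n1 k' x := by
  intro i
  rw [vv, vv]
  by_cases h1 : (i:ℕ) < k
  · rw [if_pos h1, if_pos (lt_of_lt_of_le h1 hkk)]
  · rw [if_neg h1]
    split
    · exact (grid_facts hn1 (x i)).2.2
    · exact le_rfl

lemma update_mem_cube {d n1 : ℕ} (hn1 : 1 ≤ n1) (k : ℕ) (x : Fin d → ℝ) (i₀ : Fin d)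
    (m : ℤ) (h0 : 0 ≤ m) (h1 : m ≤ (n1:ℤ)) :
    Function.update (vv d n1 k x) i₀ ((m:ℝ)/n1) ∈ cube d := by
  have hn1R : (0:ℝ) < n1 := by exact_mod_cast Nat.pos_of_ne_zero (by omega)
  intro i _
  by_cases hi : i = i₀
  · subst hi
    rw [Function.update_self]
    constructor
    · apply div_nonneg _ hn1R.le; exact_mod_cast h0
    · rw [div_le_one hn1R]; exact_mod_cast h1
  · rw [Function.update_of_ne hi]
    exact vv_mem_cube hn1 k x i (Set.mem_univ i)

lemma oneDim (n1 : ℕ) (hn1 : 1 ≤ n1) (M : ℝ) (G : ℤ → ℝ)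
    (hmono : ∀ a b : ℤ, 0 ≤ a → a ≤ b → b ≤ (n1:ℤ) → G a ≤ G b)
    (hbd : ∀ m : ℤ, 0 ≤ m → m ≤ (n1:ℤ) → |G m| ≤ M) :
    ∫⁻ t in Set.Icc (0:ℝ) 1,
        ENNReal.ofReal (G ⌈(n1:ℝ) * phi t⌉ - G ⌊(n1:ℝ) * phi t⌋) ≤
      ENNReal.ofReal (2 * M / n1) := by
  have hn1R : (0:ℝ) < n1 := by exact_mod_cast Nat.pos_of_ne_zero (by omega)
  set F : ℝ → ℝ≥0∞ := fun t => ENNReal.ofReal (G ⌈(n1:ℝ) * phi t⌉ - G ⌊(n1:ℝ) * phi t⌋)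
    with hF
  set S : Fin n1 → Set ℝ := fun k => Set.Ioo (((k:ℕ):ℝ)/n1) ((((k:ℕ):ℝ)+1)/n1) with hS
  set N : Set ℝ := ⋃ m : ℤ, {((m:ℝ)/n1)} with hN
  have cover : Set.Icc (0:ℝ) 1 ⊆ N ∪ ⋃ k : Fin n1, S k := by
    intro t ht
    by_cases h : ∃ m : ℤ, (m:ℝ) = (n1:ℝ) * t
    · left
      obtain ⟨m, hm⟩ := h
      refine Set.mem_iUnion.2 ⟨m, ?_⟩
      simp only [Set.mem_singleton_iff]
      field_simp
      linarith [hm]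
    · right
      have h0 : (0:ℝ) ≤ (n1:ℝ) * t := mul_nonneg hn1R.le ht.1
      have hfl0 : 0 ≤ ⌊(n1:ℝ) * t⌋ := Int.floor_nonneg.2 h0
      have hlt : ((⌊(n1:ℝ) * t⌋ : ℤ) : ℝ) < (n1:ℝ) * t :=
        lt_of_le_of_ne (Int.floor_le _) (fun c => h ⟨_, c⟩)
      have hub : (n1:ℝ) * t < (⌊(n1:ℝ) * t⌋ : ℤ) + 1 := Int.lt_floor_add_one _
      have hle : (n1:ℝ) * t ≤ n1 := by nlinarith [ht.2]
      have hmlt : ⌊(n1:ℝ) * t⌋ < (n1:ℤ) := by exact_mod_cast lt_of_lt_of_le hlt hle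
      refine Set.mem_iUnion.2 ⟨⟨⌊(n1:ℝ) * t⌋.toNat, by omega⟩, ?_⟩
      have hcast : ((⌊(n1:ℝ) * t⌋.toNat : ℕ) : ℝ) = ((⌊(n1:ℝ) * t⌋ : ℤ) : ℝ) := by
        exact_mod_cast congrArg (Int.cast : ℤ → ℝ) (Int.toNat_of_nonneg hfl0)
      constructor
      · show ((⌊(n1:ℝ) * t⌋.toNat : ℕ) : ℝ)/n1 < t
        rw [hcast, div_lt_iff₀ hn1R]
        linarith
      · show t < (((⌊(n1:ℝ) * t⌋.toNat : ℕ) : ℝ)+1)/n1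
        rw [hcast, lt_div_iff₀ hn1R]
        linarith
  have hcell : ∀ k : Fin n1, ∫⁻ t in S k, F t =
      ENNReal.ofReal ((G ((k:ℕ)+1) - G ((k:ℕ))) * (1/(n1:ℝ))) := by
    intro k
    have hk1 : ((k:ℕ):ℝ) + 1 ≤ (n1:ℝ) := by exact_mod_cast Nat.succ_le_of_lt k.isLt
    have hpt : ∀ t ∈ S k, F t = ENNReal.ofReal (G ((k:ℕ)+1) - G ((k:ℕ))) := by
      intro t ht
      have ht1 : ((k:ℕ):ℝ) < (n1:ℝ) * t := by
        have := (div_lt_iff₀ hn1R).1 ht.1; linarith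
      have ht2 : (n1:ℝ) * t < ((k:ℕ):ℝ) + 1 := by
        have := (lt_div_iff₀ hn1R).1 ht.2; linarith
      have htIcc : t ∈ Set.Icc (0:ℝ) 1 := by
        constructor
        · have : (0:ℝ) ≤ ((k:ℕ):ℝ)/n1 := by positivity
          linarith [ht.1]
        · have : (((k:ℕ):ℝ)+1)/n1 ≤ 1 := by
            rw [div_le_one hn1R]; exact hk1
          linarith [ht.2]
      have hfl : ⌊(n1:ℝ) * phi t⌋ = ((k:ℕ):ℤ) := by
        rw [phi_eq htIcc, Int.floor_eq_iff]
        constructor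
        · push_cast; linarith
        · push_cast; linarith
      have hce : ⌈(n1:ℝ) * phi t⌉ = ((k:ℕ):ℤ) + 1 := by
        rw [phi_eq htIcc, Int.ceil_eq_iff]
        constructor
        · push_cast; linarith
        · push_cast; linarith
      rw [hF]
      simp only [hfl, hce]
    rw [setLIntegral_congr_fun measurableSet_Ioo hpt, setLIntegral_const,
      Real.volume_Ioo]
    rw [← ENNReal.ofReal_mul (by
      have := hmono ((k:ℕ):ℤ) (((k:ℕ):ℤ)+1) (by positivity) (by omega)
        (by exact_mod_cast Nat.succ_le_of_lt k.isLt)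
      linarith)]
    congr 1
    have : (((k:ℕ):ℝ)+1)/n1 - ((k:ℕ):ℝ)/n1 = 1/(n1:ℝ) := by
      field_simp
      ring
    rw [this]
  calc ∫⁻ t in Set.Icc (0:ℝ) 1, F t
      ≤ ∫⁻ t in N ∪ ⋃ k : Fin n1, S k, F t := lintegral_mono_set cover
    _ ≤ (∫⁻ t in N, F t) + ∫⁻ t in ⋃ k : Fin n1, S k, F t := lintegral_union_le _ _ _
    _ = ∫⁻ t in ⋃ k : Fin n1, S k, F t := by
        have hNnull : volume N = 0 := measure_iUnion_null fun m => measure_singleton _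
        rw [setLIntegral_measure_zero _ _ hNnull, zero_add]
    _ ≤ ∑' k : Fin n1, ∫⁻ t in S k, F t := lintegral_iUnion_le _ _
    _ = ∑ k : Fin n1, ∫⁻ t in S k, F t := tsum_fintype _
    _ = ∑ k : Fin n1, ENNReal.ofReal ((G ((k:ℕ)+1) - G ((k:ℕ))) * (1/(n1:ℝ))) :=
        Finset.sum_congr rfl fun k _ => hcell k
    _ = ENNReal.ofReal (∑ k : Fin n1, (G ((k:ℕ)+1) - G ((k:ℕ))) * (1/(n1:ℝ))) := by
        rw [ENNReal.ofReal_sum_of_nonneg]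
        intro k _
        have := hmono ((k:ℕ):ℤ) (((k:ℕ):ℤ)+1) (by positivity) (by omega)
          (by exact_mod_cast Nat.succ_le_of_lt k.isLt)
        have h1 : (0:ℝ) ≤ 1/(n1:ℝ) := by positivity
        nlinarith
    _ ≤ ENNReal.ofReal (2 * M / n1) := by
        apply ENNReal.ofReal_le_ofReal
        have hsum : ∑ k : Fin n1, (G ((k:ℕ)+1) - G ((k:ℕ))) * (1/(n1:ℝ)) =
            (G n1 - G 0) * (1/(n1:ℝ)) := by
          rw [Fin.sum_univ_eq_sum_range (fun j : ℕ => (G (j+1) - G j) * (1/(n1:ℝ))) n1,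
            ← Finset.sum_mul]
          congr 1
          have := Finset.sum_range_sub (fun j : ℕ => G (j:ℤ)) n1
          push_cast at this ⊢
          exact this
        rw [hsum]
        have hb1 := hbd 0 le_rfl (by exact_mod_cast Nat.zero_le n1)
        have hb2 := hbd (n1:ℤ) (by exact_mod_cast Nat.zero_le n1) le_rfl
        rw [abs_le] at hb1 hb2
        have h2M : G (n1:ℤ) - G 0 ≤ 2 * M := by linarith
        have := mul_le_mul_of_nonneg_right h2M (by positivity : (0:ℝ) ≤ 1/(n1:ℝ))
        calc (G (n1:ℤ) - G 0) * (1/(n1:ℝ)) ≤ 2*M*(1/(n1:ℝ)) := this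
          _ = 2*M/n1 := by ring


lemma meas_pair {d n1 : ℕ} :
    Measurable (fun x : Fin d → ℝ =>
      ((fun i => ⌊(n1:ℝ) * phi (x i)⌋, fun i => ⌈(n1:ℝ) * phi (x i)⌉) :
        (Fin d → ℤ) × (Fin d → ℤ))) := by
  have hc : Continuous phi := continuous_const.max (continuous_id.min continuous_const)
  apply Measurable.prod
  · exact measurable_pi_lambda _ fun i => Int.measurable_floor.comp
      ((continuous_const.mul (hc.comp (continuous_apply i))).measurable)
  · exact measurable_pi_lambda _ fun i => Int.measurable_ceil.comp
      ((continuous_const.mul (hc.comp (continuous_apply i))).measurable)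

lemma meas_aux {d n1 : ℕ} (g : (Fin d → ℤ) → (Fin d → ℤ) → ℝ≥0∞) :
    Measurable (fun x : Fin d → ℝ =>
      g (fun i => ⌊(n1:ℝ) * phi (x i)⌋) (fun i => ⌈(n1:ℝ) * phi (x i)⌉)) :=
  (measurable_of_countable (fun p : (Fin d → ℤ) × (Fin d → ℤ) => g p.1 p.2)).comp meas_pair

lemma meas_aux' {d n1 : ℕ} (g : (Fin d → ℤ) → (Fin d → ℤ) → ℝ≥0∞) :
    Measurable (fun x : Fin d → ℝ =>
      g (fun i => ⌊(n1:ℝ) * x i⌋) (fun i => ⌈(n1:ℝ) * x i⌉)) := by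
  have h : Measurable (fun x : Fin d → ℝ =>
      ((fun i => ⌊(n1:ℝ) * x i⌋, fun i => ⌈(n1:ℝ) * x i⌉) : (Fin d → ℤ) × (Fin d → ℤ))) := by
    apply Measurable.prod
    · exact measurable_pi_lambda _ fun i =>
        Int.measurable_floor.comp ((continuous_const.mul (continuous_apply i)).measurable)
    · exact measurable_pi_lambda _ fun i =>
        Int.measurable_ceil.comp ((continuous_const.mul (continuous_apply i)).measurable)
  exact (measurable_of_countable (fun p : (Fin d → ℤ) × (Fin d → ℤ) => g p.1 p.2)).comp h

instance : IsProbabilityMeasure ((volume : Measure ℝ).restrict (Set.Icc (0:ℝ) 1)) := by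
  constructor
  rw [Measure.restrict_apply_univ, Real.volume_Icc]
  norm_num

lemma restrict_cube_eq (d : ℕ) :
    (volume : Measure (Fin d → ℝ)).restrict (cube d) =
      Measure.pi (fun _ : Fin d => (volume : Measure ℝ).restrict (Set.Icc (0:ℝ) 1)) := by
  refine (Measure.pi_eq fun s hs => ?_).symm
  rw [cube, Measure.restrict_apply (MeasurableSet.univ_pi hs), ← Set.pi_inter_distrib,
    volume_pi_pi]
  exact Finset.prod_congr rfl fun i _ => (Measure.restrict_apply (hs i)).symm

lemma lmarginal_const_prob {δ : Type*} [DecidableEq δ] {π : δ → Type*}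
    [∀ i, MeasurableSpace (π i)] (μ : ∀ i, Measure (π i)) [∀ i, IsProbabilityMeasure (μ i)]
    (s : Finset δ) (c : ℝ≥0∞) : ∀ x, (∫⋯∫⁻_s, (fun _ => c) ∂μ) x = c := by
  induction s using Finset.induction with
  | empty => intro x; simp
  | @insert a s hi ih =>
    intro x
    rw [lmarginal_insert _ measurable_const hi]
    simp [ih]

lemma vv_update {d n1 : ℕ} (k : ℕ) (hk : k < d) (x : Fin d → ℝ) (t : ℝ) :
    vv d n1 (k+1) (Function.update x ⟨k, hk⟩ t) =
      Function.update (vv d n1 k x) ⟨k, hk⟩ (gridC n1 t) ∧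
    vv d n1 k (Function.update x ⟨k, hk⟩ t) =
      Function.update (vv d n1 k x) ⟨k, hk⟩ (gridF n1 t) := by
  constructor <;> funext i <;> by_cases hi : i = (⟨k, hk⟩ : Fin d)
  · subst hi
    rw [Function.update_self, vv, if_pos (by simp), Function.update_self]
  · have hiv : (i:ℕ) ≠ k := fun h => hi (Fin.ext h)
    rw [Function.update_of_ne hi, vv, vv, Function.update_of_ne hi]
    rcases Nat.lt_or_ge (i:ℕ) k with h | h
    · rw [if_pos (by omega), if_pos h]
    · rw [if_neg (by omega), if_neg (by omega)]
  · subst hi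
    rw [Function.update_self, vv, if_neg (by simp), Function.update_self]
  · have hiv : (i:ℕ) ≠ k := fun h => hi (Fin.ext h)
    rw [Function.update_of_ne hi, vv, vv, Function.update_of_ne hi]

lemma keyStep (d n1 : ℕ) (hn1 : 1 ≤ n1) (f : (Fin d → ℝ) → ℝ) (hf : BlockInc d f)
    (M : ℝ) (hM : ∀ x ∈ cube d, |f x| ≤ M) (k : ℕ) (hk : k < d) :
    ∫⁻ x, ENNReal.ofReal (f (vv d n1 (k+1) x) - f (vv d n1 k x))
        ∂(Measure.pi fun _ : Fin d => (volume : Measure ℝ).restrict (Set.Icc (0:ℝ) 1)) ≤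
      ENNReal.ofReal (2 * M / n1) := by
  have hn1R : (0:ℝ) < n1 := by exact_mod_cast Nat.pos_of_ne_zero (by omega)
  set i₀ : Fin d := ⟨k, hk⟩ with hi₀
  have hmeas : Measurable fun x : Fin d → ℝ =>
      ENNReal.ofReal (f (vv d n1 (k+1) x) - f (vv d n1 k x)) := by
    have := meas_aux (d := d) (n1 := n1) (fun a b => ENNReal.ofReal
      (f (fun i => if (i:ℕ) < k+1 then ((b i : ℤ) : ℝ)/n1 else ((a i : ℤ) : ℝ)/n1) -
       f (fun i => if (i:ℕ) < k then ((b i : ℤ) : ℝ)/n1 else ((a i : ℤ) : ℝ)/n1)))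
    exact this
  -- inner bound
  have inner : ∀ x : Fin d → ℝ,
      (∫⁻ t, ENNReal.ofReal (f (vv d n1 (k+1) (Function.update x i₀ t)) -
          f (vv d n1 k (Function.update x i₀ t)))
        ∂((volume : Measure ℝ).restrict (Set.Icc (0:ℝ) 1))) ≤
      ENNReal.ofReal (2 * M / n1) := by
    intro x
    set G : ℤ → ℝ := fun m => f (Function.update (vv d n1 k x) i₀ ((m:ℝ)/n1)) with hG
    have hrw : ∀ t : ℝ,
        ENNReal.ofReal (f (vv d n1 (k+1) (Function.update x i₀ t)) -
          f (vv d n1 k (Function.update x i₀ t))) =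
        ENNReal.ofReal (G ⌈(n1:ℝ) * phi t⌉ - G ⌊(n1:ℝ) * phi t⌋) := by
      intro t
      rw [(vv_update k hk x t).1, (vv_update k hk x t).2]
      rfl
    simp_rw [hrw]
    apply oneDim n1 hn1 M G
    · intro a b ha hab hb
      exact hf _ _ (update_mem_cube hn1 k x i₀ a ha (le_trans hab hb))
        (update_mem_cube hn1 k x i₀ b (le_trans ha hab) hb)
        (by
          intro i
          by_cases hi : i = i₀
          · subst hi
            rw [Function.update_self, Function.update_self]
            gcongr
          · rw [Function.update_of_ne hi, Function.update_of_ne hi])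
    · intro m h0 h1
      exact hM _ (update_mem_cube hn1 k x i₀ m h0 h1)
  rw [lintegral_eq_lmarginal_univ (fun _ => (0:ℝ))]
  rw [← Finset.insert_erase (Finset.mem_univ i₀),
    lmarginal_insert' _ hmeas (Finset.notMem_erase i₀ _)]
  calc (∫⋯∫⁻_Finset.univ.erase i₀,
        (fun x => ∫⁻ t, ENNReal.ofReal (f (vv d n1 (k+1) (Function.update x i₀ t)) -
          f (vv d n1 k (Function.update x i₀ t)))
          ∂((volume : Measure ℝ).restrict (Set.Icc (0:ℝ) 1))) ∂_) (fun _ => (0:ℝ))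
      ≤ (∫⋯∫⁻_Finset.univ.erase i₀, (fun _ => ENNReal.ofReal (2 * M / n1)) ∂_)
          (fun _ => (0:ℝ)) := lmarginal_mono (fun x => inner x) _
    _ = ENNReal.ofReal (2 * M / n1) := lmarginal_const_prob _ _ _ _

lemma meas_term (d n1 : ℕ) (f : (Fin d → ℝ) → ℝ) (k k' : ℕ) :
    Measurable fun x : Fin d → ℝ =>
      ENNReal.ofReal (f (vv d n1 k' x) - f (vv d n1 k x)) := by
  have := meas_aux (d := d) (n1 := n1) (fun a b => ENNReal.ofReal
    (f (fun i => if (i:ℕ) < k' then ((b i : ℤ) : ℝ)/n1 else ((a i : ℤ) : ℝ)/n1) -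
     f (fun i => if (i:ℕ) < k then ((b i : ℤ) : ℝ)/n1 else ((a i : ℤ) : ℝ)/n1)))
  exact this

end Stmt15Aux

open Stmt15Aux

/-- for `d ≥ 1`, `n1 = n^{1/d} ≥ 1` and a bounded block increasing `f`, with
`f_L(x) = f(⌊n1 x⌋/n1)` and `f_U(x) = f(⌈n1 x⌉/n1)` (coordinatewise), one has
`∫_{[0,1]^d} (f_U − f_L)² dx ≤ 4 d n^{−1/d} ‖f‖∞²`. -/
theorem stmt15 (d n1 : ℕ) (hd : 1 ≤ d) (hn1 : 1 ≤ n1)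
    (f : (Fin d → ℝ) → ℝ) (hf : BlockInc d f)
    (M : ℝ) (hM : ∀ x ∈ cube d, |f x| ≤ M) :
    (∫⁻ x in cube d,
        ENNReal.ofReal
          ((f (fun j => (⌈(n1 : ℝ) * x j⌉ : ℤ) / n1) -
            f (fun j => (⌊(n1 : ℝ) * x j⌋ : ℤ) / n1)) ^ 2)) ≤
      ENNReal.ofReal (4 * (d : ℝ) * ((n1 ^ d : ℕ) : ℝ) ^ (-(1 : ℝ) / d) * M ^ 2) := by
  have hn1R : (0:ℝ) < n1 := by exact_mod_cast Nat.pos_of_ne_zero (by omega)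
  have hdR : (d:ℝ) ≠ 0 := by
    have : (0:ℝ) < d := by exact_mod_cast Nat.pos_of_ne_zero (by omega)
    exact ne_of_gt this
  have hzero_mem : (fun _ : Fin d => (0:ℝ)) ∈ cube d := fun i _ => ⟨le_rfl, zero_le_one⟩
  have hMnn : 0 ≤ M := le_trans (abs_nonneg _) (hM _ hzero_mem)
  have hcubeMeas : MeasurableSet (cube d) :=
    MeasurableSet.univ_pi fun _ => measurableSet_Icc
  -- rewrite the RHS
  have hRHS : ((n1 ^ d : ℕ) : ℝ) ^ (-(1 : ℝ) / d) = (n1:ℝ)⁻¹ := by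
    push_cast
    rw [← Real.rpow_natCast (n1:ℝ) d, ← Real.rpow_mul hn1R.le,
      show (d:ℝ) * (-(1:ℝ)/d) = -1 by field_simp,
      Real.rpow_neg_one]
  rw [hRHS]
  -- replace the integrand by its clamped version
  have hcongr : (∫⁻ x in cube d,
        ENNReal.ofReal
          ((f (fun j => (⌈(n1 : ℝ) * x j⌉ : ℤ) / n1) -
            f (fun j => (⌊(n1 : ℝ) * x j⌋ : ℤ) / n1)) ^ 2)) =
      ∫⁻ x in cube d,
        ENNReal.ofReal ((f (vv d n1 d x) - f (vv d n1 0 x)) ^ 2) := by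
    refine setLIntegral_congr_fun hcubeMeas fun x hx => ?_
    have h1 : (fun j : Fin d => ((⌈(n1 : ℝ) * x j⌉ : ℤ) : ℝ) / n1) = vv d n1 d x := by
      funext j
      rw [vv, if_pos j.isLt, gridC, phi_eq (hx j (Set.mem_univ j))]
    have h2 : (fun j : Fin d => ((⌊(n1 : ℝ) * x j⌋ : ℤ) : ℝ) / n1) = vv d n1 0 x := by
      funext j
      rw [vv, if_neg (Nat.not_lt_zero _), gridF, phi_eq (hx j (Set.mem_univ j))]
    rw [h1, h2]
  rw [hcongr]
  have hterm_nonneg : ∀ (k k' : ℕ), k ≤ k' → ∀ x : Fin d → ℝ,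
      0 ≤ f (vv d n1 k' x) - f (vv d n1 k x) := by
    intro k k' hkk x
    have := hf _ _ (vv_mem_cube hn1 k x) (vv_mem_cube hn1 k' x) (vv_mono hn1 hkk x)
    linarith
  calc ∫⁻ x in cube d, ENNReal.ofReal ((f (vv d n1 d x) - f (vv d n1 0 x)) ^ 2)
      ≤ ∫⁻ x in cube d,
          ENNReal.ofReal (2*M) * ENNReal.ofReal (f (vv d n1 d x) - f (vv d n1 0 x)) := by
        apply lintegral_mono
        intro x
        simp only []
        rw [← ENNReal.ofReal_mul (by linarith : (0:ℝ) ≤ 2*M)]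
        apply ENNReal.ofReal_le_ofReal
        have hba := hterm_nonneg 0 d (Nat.zero_le d) x
        have haM := abs_le.1 (hM _ (vv_mem_cube hn1 d x))
        have hbM := abs_le.1 (hM _ (vv_mem_cube hn1 0 x))
        nlinarith
    _ = ENNReal.ofReal (2*M) *
          ∫⁻ x in cube d, ENNReal.ofReal (f (vv d n1 d x) - f (vv d n1 0 x)) :=
        lintegral_const_mul' _ _ ENNReal.ofReal_ne_top
    _ = ENNReal.ofReal (2*M) * ∫⁻ x in cube d,
          ∑ k ∈ Finset.range d, ENNReal.ofReal (f (vv d n1 (k+1) x) - f (vv d n1 k x)) := by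
        congr 1
        refine lintegral_congr fun x => ?_
        rw [← ENNReal.ofReal_sum_of_nonneg (fun k _ => hterm_nonneg k (k+1) (Nat.le_succ k) x),
          Finset.sum_range_sub (fun k => f (vv d n1 k x)) d]
    _ = ENNReal.ofReal (2*M) * ∑ k ∈ Finset.range d,
          ∫⁻ x in cube d, ENNReal.ofReal (f (vv d n1 (k+1) x) - f (vv d n1 k x)) := by
        congr 1
        exact lintegral_finset_sum _ fun k _ => meas_term d n1 f k (k+1)
    _ ≤ ENNReal.ofReal (2*M) * ∑ k ∈ Finset.range d, ENNReal.ofReal (2 * M / n1) := by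
        refine mul_le_mul_of_nonneg_left ?_ zero_le'
        apply Finset.sum_le_sum
        intro k hk
        rw [restrict_cube_eq]
        exact keyStep d n1 hn1 f hf M hM k (Finset.mem_range.1 hk)
    _ = ENNReal.ofReal (2*M) * ((d : ℝ≥0∞) * ENNReal.ofReal (2 * M / n1)) := by
        rw [Finset.sum_const, Finset.card_range, nsmul_eq_mul]
    _ = ENNReal.ofReal (4 * (d : ℝ) * (n1:ℝ)⁻¹ * M ^ 2) := by
        rw [← ENNReal.ofReal_natCast d, ← ENNReal.ofReal_mul (by positivity),
          ← ENNReal.ofReal_mul (by linarith)]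
        congr 1
        field_simp
        ring

end
end

section
/- Let h : [0,∞) → (0,∞) be a non-decreasing function such that (i) there exists x0 ≥ 0 such that h is concave on [x0, ∞), and (ii) there exists x1 > x0 such that h(x1) − x1·h'_+(x1) ≥ h(x0), where h'_+ denotes the right derivative of h. Then for every nonnegative random variable X with E X < ∞, one has E h(X) ≤ (h(x1)/h(0)) · h(E X). -/
open MeasureTheory
open scoped ENNReal NNReal

open Set Filter Topology in
/-- Existence of a supporting line at an interior point of the concavity region. -/
lemma stmt16_support {h : ℝ → ℝ} {x0 : ℝ} (a : ℝ)
    (hmono : MonotoneOn h (Set.Ici (0 : ℝ))) (hx0 : 0 ≤ x0)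
    (hconc : ConcaveOn ℝ (Set.Ici x0) h) (hx0a : x0 < a) :
    ∃ s : ℝ, HasDerivWithinAt h s (Set.Ici a) a ∧ 0 ≤ s ∧
      ∀ y, x0 ≤ y → h y ≤ h a + s * (y - a) := by
  have haS : a ∈ Ici x0 := hx0a.le
  have ha0 : (0 : ℝ) ≤ a := hx0.trans hx0a.le
  have hIoi : Ioi a ⊆ Ici x0 := fun t ht => (hx0a.trans ht).le
  have hconv : ConvexOn ℝ (Ici x0) (-h) := hconc.neg
  set G : ℝ → ℝ := slope (-h) a with hG
  have hGdef : ∀ t : ℝ, G t = ((-h) t - (-h) a) / (t - a) := by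
    intro t; rw [hG, slope_def_field]
  -- G is monotone on `Ioi a`
  have hmonoG : MonotoneOn G (Ioi a) := by
    intro t ht t' ht' htt'
    rcases eq_or_lt_of_le htt' with rfl | hlt
    · exact le_rfl
    · rw [hGdef, hGdef]
      exact hconv.secant_mono haS (hIoi ht) (hIoi ht') (ne_of_gt ht) (ne_of_gt ht') htt'
  -- G is bounded below on `Ioi a`
  have hbddG : BddBelow (G '' Ioi a) := by
    refine ⟨((-h) a - (-h) x0) / (a - x0), ?_⟩
    rintro _ ⟨t, ht, rfl⟩
    rw [hGdef]
    exact hconv.slope_mono_adjacent (self_mem_Ici) (hIoi ht) hx0a ht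
  have hne : (Ioi a).Nonempty := nonempty_Ioi
  set s0 : ℝ := sInf (G '' Ioi a) with hs0
  have htend : Tendsto G (𝓝[>] a) (𝓝 s0) :=
    MonotoneOn.tendsto_nhdsGT hmonoG hbddG
  have hderivneg : HasDerivWithinAt (-h) s0 (Ioi a) a := by
    rw [hasDerivWithinAt_iff_tendsto_slope' (self_notMem_Ioi)]
    exact htend
  have hderiv : HasDerivWithinAt h (-s0) (Ioi a) a := by
    have := hderivneg.neg
    simpa using this
  refine ⟨-s0, hderiv.Ici_of_Ioi, ?_, ?_⟩
  · -- nonnegativity of the right derivative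
    have : s0 ≤ G (a + 1) := csInf_le hbddG ⟨a + 1, by simp, rfl⟩
    have hG1 : G (a + 1) ≤ 0 := by
      rw [hGdef]
      have hmono1 : h a ≤ h (a + 1) := hmono (Set.mem_Ici.2 ha0) (Set.mem_Ici.2 (by linarith)) (by linarith)
      have : (-h) (a + 1) - (-h) a ≤ 0 := by simp only [Pi.neg_apply]; linarith
      have hden : (0 : ℝ) < (a + 1) - a := by linarith
      exact div_nonpos_of_nonpos_of_nonneg this hden.le
    linarith
  · intro y hy
    rcases lt_trichotomy y a with hya | rfl | hay
    · -- y < a : use that `s0` is a lower bound exceeded by the left secant slope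
      have hlow : slope (-h) y a ≤ s0 := by
        refine le_csInf (hne.image _) ?_
        rintro _ ⟨t, ht, rfl⟩
        rw [hGdef, slope_def_field]
        exact hconv.slope_mono_adjacent hy (hIoi ht) hya ht
      rw [slope_def_field] at hlow
      have hden : (0 : ℝ) < a - y := by linarith
      rw [div_le_iff₀ hden] at hlow
      simp only [Pi.neg_apply] at hlow
      nlinarith
    · simp
    · -- a < y : slope to the right is below the right derivative
      have := hconc.slope_le_of_hasDerivWithinAt_Ioi haS (hIoi hay) hay hderiv
      rw [slope_def_field] at this
      have hden : (0 : ℝ) < y - a := by linarith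
      rw [div_le_iff₀ hden] at this
      nlinarith

/-- a generalised Jensen inequality. Let `h : [0,∞) → (0,∞)` be non-decreasing,
concave on `[x0,∞)` for some `x0 ≥ 0`, and suppose there exists `x1 > x0` with
`h(x1) − x1 h'_+(x1) ≥ h(x0)`, where `h'_+` is the right derivative. Then for every
nonnegative integrable random variable `X`, `E h(X) ≤ (h(x1)/h(0)) · h(E X)`. -/
theorem stmt16 (h : ℝ → ℝ) (x0 x1 : ℝ)
    (hpos : ∀ x : ℝ, 0 ≤ x → 0 < h x)
    (hmono : MonotoneOn h (Set.Ici (0 : ℝ)))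
    (hx0 : 0 ≤ x0)
    (hconc : ConcaveOn ℝ (Set.Ici x0) h)
    (hx01 : x0 < x1)
    (hkey : h x0 ≤ h x1 - x1 * derivWithin h (Set.Ici x1) x1)
    {Ω : Type*} [MeasurableSpace Ω] (μ : Measure Ω) [IsProbabilityMeasure μ]
    (X : Ω → ℝ) (hX : ∀ ω, 0 ≤ X ω) (hXint : Integrable X μ) :
    (∫⁻ ω, ENNReal.ofReal (h (X ω)) ∂μ) ≤
      ENNReal.ofReal (h x1 / h 0 * h (∫ ω, X ω ∂μ)) := by
  set m := ∫ ω, X ω ∂μ with hm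
  have hm0 : 0 ≤ m := integral_nonneg hX
  have hx1' : (0 : ℝ) ≤ x1 := hx0.trans hx01.le
  have h0pos : 0 < h 0 := hpos 0 le_rfl
  have hx0pos : 0 < h x0 := hpos x0 hx0
  have h0m : h 0 ≤ h m := hmono (Set.mem_Ici.2 le_rfl) hm0 hm0
  have h0x1 : h 0 ≤ h x1 := hmono (Set.mem_Ici.2 le_rfl) hx1' hx1'
  -- right derivative at x1
  obtain ⟨s1, hs1deriv, hs1nn, hs1supp⟩ := stmt16_support x1 hmono hx0 hconc hx01
  have hs1eq : derivWithin h (Set.Ici x1) x1 = s1 :=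
    hs1deriv.derivWithin ((uniqueDiffOn_Ici x1) x1 Set.self_mem_Ici)
  rw [hs1eq] at hkey
  -- a global affine upper bound whose value at `m` is at most the target
  obtain ⟨b, a, hb0, ha0, hbound, hfin⟩ :
      ∃ b a : ℝ, 0 ≤ b ∧ 0 ≤ a ∧ (∀ x, 0 ≤ x → h x ≤ a + b * x) ∧
        a + b * m ≤ h x1 / h 0 * h m := by
    rcases le_or_gt m x1 with hmx1 | hx1m
    · -- use the tangent line at x1
      refine ⟨s1, h x1 - x1 * s1, hs1nn, by linarith, ?_, ?_⟩
      · intro x hx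
        rcases le_or_gt x0 x with hx0x | hxx0
        · have := hs1supp x hx0x
          nlinarith
        · have h1 : h x ≤ h x0 := hmono hx hx0 hxx0.le
          nlinarith
      · have hc : h x1 = h x1 / h 0 * h 0 := by field_simp
        have hcm : h x1 / h 0 * h 0 ≤ h x1 / h 0 * h m := by
          have : (0 : ℝ) ≤ h x1 / h 0 := div_nonneg (hpos x1 hx1').le h0pos.le
          nlinarith
        nlinarith
    · -- use the tangent line at m
      obtain ⟨s, hsderiv, hsnn, hssupp⟩ :=
        stmt16_support m hmono hx0 hconc (hx01.trans hx1m)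
      -- `s ≤ s1`
      have hsle : s ≤ s1 := by
        have h1 : h x1 ≤ h m + s * (x1 - m) := hssupp x1 hx01.le
        have h2 : (h m - h x1) / (m - x1) ≤ s1 := by
          have := hconc.slope_le_of_hasDerivWithinAt_Ioi (Set.mem_Ici.2 hx01.le)
            (Set.mem_Ici.2 (hx01.trans hx1m).le) hx1m hs1deriv.Ioi_of_Ici
          rwa [slope_def_field] at this
        have hden : (0 : ℝ) < m - x1 := by linarith
        rw [div_le_iff₀ hden] at h2
        nlinarith
      have hintercept : h x0 ≤ h m - m * s := by
        have h1 : h x1 ≤ h m + s * (x1 - m) := hssupp x1 hx01.le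
        nlinarith
      refine ⟨s, h m - m * s, hsnn, by linarith, ?_, ?_⟩
      · intro x hx
        rcases le_or_gt x0 x with hx0x | hxx0
        · have := hssupp x hx0x
          nlinarith
        · have h1 : h x ≤ h x0 := hmono hx hx0 hxx0.le
          nlinarith
      · have hc1 : (1 : ℝ) ≤ h x1 / h 0 := (one_le_div h0pos).2 h0x1
        have hmpos : 0 < h m := hpos m hm0
        nlinarith
  -- conclude by integrating the affine bound
  calc (∫⁻ ω, ENNReal.ofReal (h (X ω)) ∂μ)
      ≤ ∫⁻ ω, ENNReal.ofReal (a + b * X ω) ∂μ :=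
        lintegral_mono fun ω => ENNReal.ofReal_le_ofReal (hbound _ (hX ω))
    _ = ENNReal.ofReal (∫ ω, (a + b * X ω) ∂μ) := by
        exact (ofReal_integral_eq_lintegral_ofReal
          (by exact (integrable_const a).add (hXint.const_mul b))
          (ae_of_all _ fun ω => add_nonneg ha0 (mul_nonneg hb0 (hX ω)))).symm
    _ = ENNReal.ofReal (a + b * m) := by
        rw [integral_add (integrable_const a) (hXint.const_mul b),
          integral_const, integral_const_mul]
        simp [hm]
    _ ≤ ENNReal.ofReal (h x1 / h 0 * h m) := ENNReal.ofReal_le_ofReal hfin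
end

section
/- There exist universal constants c > 0 and ε0 > 0 such that for every integer n1 ≥ 2 with n = n1², there is a subset S of M(L_{2,n}) ∩ B_2(1) with cardinality |S| ≥ exp(c (log n)²) such that ‖θ − θ'‖₂ ≥ ε0 for all distinct θ, θ' ∈ S. In particular, the ε0-covering number of M(L_{2,n}) ∩ B_2(1) in the Euclidean norm satisfies log N(ε0, M(L_{2,n}) ∩ B_2(1), ‖·‖₂) ≥ c (log n)². -/
open scoped ENNReal NNReal

noncomputable section

/-- The monotone cone `M(L_{2,n})` on the lattice `{1,...,n1}²`, ordered coordinatewise. -/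
def monotoneCone2 (n1 : ℕ) : Set ((Fin 2 → Fin n1) → ℝ) :=
  {θ | ∀ x y : Fin 2 → Fin n1, x ≤ y → θ x ≤ θ y}

open Finset

set_option maxHeartbeats 2000000

section AuxCoding

variable {ι : Type*} [Fintype ι] [DecidableEq ι]

lemma ball_card_le (c : ι → Bool) (d : ℕ) :
    ((univ : Finset (ι → Bool)).filter fun y => hammingDist y c < d).card ≤
      ∑ i ∈ range d, (Fintype.card ι).choose i := by
  classical
  have hcard : ((range d).biUnion fun i => Finset.powersetCard i (univ : Finset ι)).card
      = ∑ i ∈ range d, (Fintype.card ι).choose i := by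
    rw [Finset.card_biUnion]
    · simp [Finset.card_powersetCard]
    · intro i hi j hj hij
      refine Finset.disjoint_left.2 fun s hs hs' => ?_
      rw [Finset.mem_powersetCard] at hs hs'
      exact hij (hs.2 ▸ hs'.2 ▸ rfl)
  rw [← hcard]
  apply Finset.card_le_card_of_injOn (fun y => univ.filter fun i => y i ≠ c i)
  · intro y hy
    simp only [coe_filter, Set.mem_setOf_eq, mem_univ, true_and] at hy
    apply Finset.mem_biUnion.2
    refine ⟨hammingDist y c, Finset.mem_range.2 hy, ?_⟩
    rw [Finset.mem_powersetCard]
    exact ⟨Finset.subset_univ _, rfl⟩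
  · intro y _ y' _ h
    simp only at h
    funext i
    by_cases hi : y i = c i
    · have : i ∉ univ.filter fun i => y i ≠ c i := by simp [hi]
      rw [h] at this
      simp only [mem_filter, mem_univ, true_and, not_not] at this
      rw [hi, this]
    · have : i ∈ univ.filter fun i => y i ≠ c i := by simp [hi]
      rw [h] at this
      simp only [mem_filter, mem_univ, true_and] at this
      revert hi this
      cases hy : y i <;> cases hy' : y' i <;> cases hc : c i <;> simp

lemma exists_code {d : ℕ} (hd : 0 < d) :
    ∃ C : Finset (ι → Bool),
      (∀ b ∈ C, ∀ b' ∈ C, b ≠ b' → d ≤ hammingDist b b') ∧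
      2 ^ (Fintype.card ι) ≤ C.card * ∑ i ∈ range d, (Fintype.card ι).choose i := by
  classical
  set P : Finset (ι → Bool) → Prop :=
    fun C => ∀ b ∈ C, ∀ b' ∈ C, b ≠ b' → d ≤ hammingDist b b' with hP
  have hPdec : DecidablePred P := Classical.decPred _
  set 𝒮 : Finset (Finset (ι → Bool)) :=
    (univ : Finset (ι → Bool)).powerset.filter P with h𝒮
  have hne : 𝒮.Nonempty := ⟨∅, by simp [h𝒮, hP]⟩
  obtain ⟨C, hC𝒮, hCmax⟩ := Finset.exists_max_image 𝒮 Finset.card hne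
  have hCsep : P C := (Finset.mem_filter.1 hC𝒮).2
  refine ⟨C, hCsep, ?_⟩
  -- covering property
  have hcover : ∀ x : ι → Bool, ∃ c ∈ C, hammingDist x c < d := by
    intro x
    by_cases hxC : x ∈ C
    · exact ⟨x, hxC, by simpa using hd⟩
    by_contra hx
    push_neg at hx
    have hins : P (insert x C) := by
      intro b hb b' hb' hbb'
      rcases Finset.mem_insert.1 hb with hb1 | hb1
      · rcases Finset.mem_insert.1 hb' with hb2 | hb2
        · exact absurd (hb1.trans hb2.symm) hbb'
        · rw [hb1]; exact hx b' hb2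
      · rcases Finset.mem_insert.1 hb' with hb2 | hb2
        · rw [hb2, hammingDist_comm]; exact hx b hb1
        · exact hCsep b hb1 b' hb2 hbb'
    have hmem : insert x C ∈ 𝒮 := Finset.mem_filter.2 ⟨Finset.mem_powerset.2 (Finset.subset_univ _), hins⟩
    have := hCmax _ hmem
    rw [Finset.card_insert_of_notMem hxC] at this
    omega
  have hsub : (univ : Finset (ι → Bool)) ⊆
      C.biUnion fun c => univ.filter fun y => hammingDist y c < d := by
    intro x _
    obtain ⟨c, hc, hxc⟩ := hcover x
    exact Finset.mem_biUnion.2 ⟨c, hc, by simp [hxc]⟩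
  calc 2 ^ Fintype.card ι = (univ : Finset (ι → Bool)).card := by
        simp [Fintype.card_fun]
    _ ≤ (C.biUnion fun c => univ.filter fun y => hammingDist y c < d).card :=
        Finset.card_le_card hsub
    _ ≤ ∑ c ∈ C, (univ.filter fun y => hammingDist y c < d).card :=
        Finset.card_biUnion_le
    _ ≤ ∑ c ∈ C, ∑ i ∈ range d, (Fintype.card ι).choose i :=
        Finset.sum_le_sum fun c _ => by
          simpa using ball_card_le c d
    _ = C.card * ∑ i ∈ range d, (Fintype.card ι).choose i := by
        rw [Finset.sum_const, smul_eq_mul]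

end AuxCoding

/-- the scaled indicator functions -/
noncomputable def uu (n1 : ℕ) {K : ℕ} (i : Fin K) (x : Fin n1) : ℝ :=
  if (n1 - 256 ^ (i : ℕ)) ≤ (x : ℕ) then ((16 : ℝ)⁻¹) ^ (i : ℕ) else 0

lemma uu_nonneg (n1 : ℕ) {K : ℕ} (i : Fin K) (x : Fin n1) : 0 ≤ uu n1 i x := by
  unfold uu; split <;> positivity

lemma uu_mono (n1 : ℕ) {K : ℕ} (i : Fin K) {x y : Fin n1} (h : x ≤ y) :
    uu n1 i x ≤ uu n1 i y := by
  unfold uu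
  have hxy : (x : ℕ) ≤ (y : ℕ) := h
  split
  · rw [if_pos (by omega)]
  · split
    · positivity
    · exact le_rfl

lemma card_ge (n1 a : ℕ) (ha : a ≤ n1) :
    ((univ : Finset (Fin n1)).filter fun x : Fin n1 => n1 - a ≤ (x : ℕ)).card = a := by
  have h1 : ((univ : Finset (Fin n1)).filter fun x : Fin n1 => n1 - a ≤ (x : ℕ)).card
      = ((Finset.range n1).filter fun x : ℕ => n1 - a ≤ x).card := by
    rw [Finset.card_filter, Finset.card_filter]
    exact Fin.sum_univ_eq_sum_range (fun x : ℕ => if n1 - a ≤ x then 1 else 0) n1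
  have h2 : (Finset.range n1).filter (fun x : ℕ => n1 - a ≤ x) = Finset.Ico (n1 - a) n1 := by
    ext x
    simp only [mem_filter, Finset.mem_range, Finset.mem_Ico]
    omega
  rw [h1, h2, Nat.card_Ico]
  omega

lemma inner_uu_le {n1 K : ℕ} (hpow : ∀ i : Fin K, 256 ^ (i : ℕ) ≤ n1) (i j : Fin K)
    (hij : (i : ℕ) ≤ (j : ℕ)) :
    ∑ x : Fin n1, uu n1 i x * uu n1 j x = ((16 : ℝ)⁻¹) ^ ((j : ℕ) - (i : ℕ)) := by
  have hstep : ∀ x : Fin n1, uu n1 i x * uu n1 j x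
      = if n1 - 256 ^ (i : ℕ) ≤ (x : ℕ) then ((16:ℝ)⁻¹) ^ ((i:ℕ) + (j:ℕ)) else 0 := by
    intro x
    unfold uu
    have hmono : 256 ^ (i:ℕ) ≤ 256 ^ (j:ℕ) := Nat.pow_le_pow_right (by norm_num) hij
    by_cases h1 : n1 - 256 ^ (i : ℕ) ≤ (x : ℕ)
    · rw [if_pos h1, if_pos (by omega), if_pos h1, pow_add]
    · rw [if_neg h1, if_neg h1, zero_mul]
  rw [Finset.sum_congr rfl fun x _ => hstep x, Finset.sum_ite, Finset.sum_const,
    Finset.sum_const_zero, add_zero, card_ge n1 (256 ^ (i:ℕ)) (hpow i), nsmul_eq_mul]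
  have hsplit : (i:ℕ) + (j:ℕ) = 2 * (i:ℕ) + ((j:ℕ) - (i:ℕ)) := by omega
  rw [hsplit, pow_add, pow_mul]
  push_cast
  rw [← mul_assoc, ← mul_pow]
  norm_num

lemma inner_uu {n1 K : ℕ} (hpow : ∀ i : Fin K, 256 ^ (i : ℕ) ≤ n1) (i j : Fin K) :
    ∑ x : Fin n1, uu n1 i x * uu n1 j x
      = ((16 : ℝ)⁻¹) ^ (max (i : ℕ) (j : ℕ) - min (i : ℕ) (j : ℕ)) := by
  rcases le_total (i : ℕ) (j : ℕ) with h | h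
  · rw [Nat.max_eq_right h, Nat.min_eq_left h]
    exact inner_uu_le hpow i j h
  · rw [Nat.max_eq_left h, Nat.min_eq_right h,
      Finset.sum_congr rfl fun x _ => mul_comm (uu n1 i x) (uu n1 j x)]
    exact inner_uu_le hpow j i h

lemma mygeom_le (M : ℕ) : ∑ t ∈ Finset.range M, ((16 : ℝ)⁻¹) ^ t ≤ 16 / 15 := by
  rw [geom_sum_eq (by norm_num)]
  rw [div_le_iff_of_neg (by norm_num : (16:ℝ)⁻¹ - 1 < 0)]
  have := pow_nonneg (by norm_num : (0:ℝ) ≤ 16⁻¹) M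
  nlinarith

lemma row_sum_le {K : ℕ} (a : Fin K) :
    ∑ j : Fin K, ((16 : ℝ)⁻¹) ^ (max (a : ℕ) (j : ℕ) - min (a : ℕ) (j : ℕ)) ≤ 17 / 15 := by
  have ha : (a : ℕ) < K := a.isLt
  rw [Fin.sum_univ_eq_sum_range (fun j : ℕ => ((16 : ℝ)⁻¹) ^ (max (a : ℕ) j - min (a : ℕ) j)) K]
  have hsplit : ∑ j ∈ Finset.range (a + 1), ((16:ℝ)⁻¹) ^ (max (a:ℕ) j - min (a:ℕ) j)
      + ∑ j ∈ Finset.Ico ((a:ℕ)+1) K, ((16:ℝ)⁻¹) ^ (max (a:ℕ) j - min (a:ℕ) j)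
      = ∑ j ∈ Finset.range K, ((16:ℝ)⁻¹) ^ (max (a:ℕ) j - min (a:ℕ) j) := by
    simp only [Finset.range_eq_Ico]
    exact Finset.sum_Ico_consecutive _ (by omega) (by omega)
  rw [← hsplit]
  have h1 : ∑ j ∈ Finset.range ((a:ℕ) + 1), ((16:ℝ)⁻¹) ^ (max (a:ℕ) j - min (a:ℕ) j)
      ≤ 16 / 15 := by
    have e1 : ∀ j ∈ Finset.range ((a:ℕ)+1), ((16:ℝ)⁻¹) ^ (max (a:ℕ) j - min (a:ℕ) j)
        = (fun t => ((16:ℝ)⁻¹) ^ ((a:ℕ) - t)) j := by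
      intro j hj
      rw [Finset.mem_range] at hj
      simp only
      rw [Nat.max_eq_left (by omega), Nat.min_eq_right (by omega)]
    rw [Finset.sum_congr rfl e1, ← Finset.sum_range_reflect (fun t => ((16:ℝ)⁻¹) ^ ((a:ℕ) - t))]
    have e2 : ∀ t ∈ Finset.range ((a:ℕ)+1), ((16:ℝ)⁻¹) ^ ((a:ℕ) - ((a:ℕ) + 1 - 1 - t))
        = ((16:ℝ)⁻¹) ^ t := by
      intro t ht
      rw [Finset.mem_range] at ht
      congr 1
      omega
    rw [Finset.sum_congr rfl e2]
    exact mygeom_le _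
  have h2 : ∑ j ∈ Finset.Ico ((a:ℕ)+1) K, ((16:ℝ)⁻¹) ^ (max (a:ℕ) j - min (a:ℕ) j)
      ≤ 1 / 15 := by
    rw [Finset.sum_Ico_eq_sum_range]
    have e3 : ∀ t ∈ Finset.range (K - ((a:ℕ)+1)), ((16:ℝ)⁻¹) ^ (max (a:ℕ) ((a:ℕ)+1+t) - min (a:ℕ) ((a:ℕ)+1+t))
        = (16:ℝ)⁻¹ * ((16:ℝ)⁻¹) ^ t := by
      intro t ht
      rw [Nat.max_eq_right (by omega), Nat.min_eq_left (by omega)]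
      rw [show (a:ℕ)+1+t - (a:ℕ) = t + 1 by omega, pow_succ]
      ring
    rw [Finset.sum_congr rfl e3, ← Finset.mul_sum]
    have := mygeom_le (K - ((a:ℕ)+1))
    nlinarith [Finset.sum_nonneg (fun t (_ : t ∈ Finset.range (K - ((a:ℕ)+1))) => pow_nonneg (by norm_num : (0:ℝ) ≤ 16⁻¹) t)]
  linarith

lemma quad_bounds {ι : Type*} [Fintype ι] [DecidableEq ι] (G : ι → ι → ℝ)
    (hsym : ∀ p q, G p q = G q p) (hdiag : ∀ p, G p p = 1) (hnn : ∀ p q, 0 ≤ G p q)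
    {R : ℝ} (hrow : ∀ p, ∑ q, G p q ≤ R) (c : ι → ℝ) :
    (2 - R) * ∑ p, (c p)^2 ≤ (∑ p, ∑ q, c p * c q * G p q) ∧
      (∑ p, ∑ q, c p * c q * G p q) ≤ R * ∑ p, (c p)^2 := by
  have h1 : ∑ p, ∑ q, G p q * (c p)^2 ≤ R * ∑ p, (c p)^2 := by
    rw [Finset.mul_sum]
    apply Finset.sum_le_sum
    intro p _
    rw [← Finset.sum_mul]
    exact mul_le_mul_of_nonneg_right (hrow p) (sq_nonneg _)
  have h2 : ∑ p, ∑ q, G p q * (c q)^2 ≤ R * ∑ p, (c p)^2 := by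
    rw [Finset.sum_comm, Finset.mul_sum]
    apply Finset.sum_le_sum
    intro q _
    calc ∑ p, G p q * (c q)^2 = (∑ p, G q p) * (c q)^2 := by
          rw [Finset.sum_mul]
          exact Finset.sum_congr rfl fun p _ => by rw [hsym]
      _ ≤ R * (c q)^2 := mul_le_mul_of_nonneg_right (hrow q) (sq_nonneg _)
  have hd : ∑ p, ∑ q : ι, (if p = q then 2 * (c p)^2 else 0) = 2 * ∑ p, (c p)^2 := by
    rw [Finset.mul_sum]
    exact Finset.sum_congr rfl fun p _ => by
      rw [Finset.sum_ite_eq Finset.univ p (fun _ => 2 * (c p)^2)]; simp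
  constructor
  · have key : ∀ p q, ((-(1/2)) * (G p q * (c p)^2) + (-(1/2)) * (G p q * (c q)^2))
        + (if p = q then 2 * (c p)^2 else 0) ≤ c p * c q * G p q := by
      intro p q
      by_cases h : p = q
      · subst h
        rw [if_pos rfl, hdiag]
        nlinarith
      · rw [if_neg h]
        nlinarith [hnn p q, sq_nonneg (c p + c q)]
    have hQ : ∑ p, ∑ q, (((-(1/2)) * (G p q * (c p)^2) + (-(1/2)) * (G p q * (c q)^2))
          + (if p = q then 2 * (c p)^2 else 0))
        ≤ ∑ p, ∑ q, c p * c q * G p q :=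
      Finset.sum_le_sum fun p _ => Finset.sum_le_sum fun q _ => key p q
    have hexp : ∑ p, ∑ q, (((-(1/2)) * (G p q * (c p)^2) + (-(1/2)) * (G p q * (c q)^2))
          + (if p = q then 2 * (c p)^2 else 0))
        = (-(1/2)) * (∑ p, ∑ q, G p q * (c p)^2) + (-(1/2)) * (∑ p, ∑ q, G p q * (c q)^2)
          + ∑ p, ∑ q : ι, (if p = q then 2 * (c p)^2 else 0) := by
      simp only [Finset.sum_add_distrib, ← Finset.mul_sum]
    rw [hexp, hd] at hQ
    linarith
  · have key : ∀ p q, c p * c q * G p q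
        ≤ (1/2) * (G p q * (c p)^2) + (1/2) * (G p q * (c q)^2) := by
      intro p q
      nlinarith [hnn p q, sq_nonneg (c p - c q)]
    have hQ : ∑ p, ∑ q, c p * c q * G p q
        ≤ ∑ p, ∑ q, ((1/2) * (G p q * (c p)^2) + (1/2) * (G p q * (c q)^2)) :=
      Finset.sum_le_sum fun p _ => Finset.sum_le_sum fun q _ => key p q
    have hexp : ∑ p, ∑ q, ((1/2) * (G p q * (c p)^2) + (1/2) * (G p q * (c q)^2))
        = (1/2) * (∑ p, ∑ q, G p q * (c p)^2) + (1/2) * (∑ p, ∑ q, G p q * (c q)^2) := by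
      simp only [Finset.sum_add_distrib, ← Finset.mul_sum]
    rw [hexp] at hQ
    linarith

lemma prod_split {n1 : ℕ} (f g : Fin n1 → ℝ) :
    ∑ w : Fin 2 → Fin n1, f (w 0) * g (w 1) = (∑ x, f x) * (∑ y, g y) := by
  rw [Fintype.sum_equiv (piFinTwoEquiv fun _ => Fin n1)
    (fun w => f (w 0) * g (w 1)) (fun p => f p.1 * g p.2) (fun w => rfl)]
  rw [Fintype.sum_prod_type, Finset.sum_mul_sum]

lemma sum_sq_expand {n1 K : ℕ} (u : Fin K → Fin n1 → ℝ) (a : Fin K × Fin K → ℝ) :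
    ∑ w : Fin 2 → Fin n1, (∑ p : Fin K × Fin K, a p * (u p.1 (w 0) * u p.2 (w 1)))^2
      = ∑ p : Fin K × Fin K, ∑ q : Fin K × Fin K,
          a p * a q * ((∑ x, u p.1 x * u q.1 x) * (∑ y, u p.2 y * u q.2 y)) := by
  have hsq : ∀ w : Fin 2 → Fin n1,
      (∑ p : Fin K × Fin K, a p * (u p.1 (w 0) * u p.2 (w 1)))^2
      = ∑ p : Fin K × Fin K, ∑ q : Fin K × Fin K,
          (a p * a q) * ((u p.1 (w 0) * u q.1 (w 0)) * (u p.2 (w 1) * u q.2 (w 1))) := by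
    intro w
    rw [sq, Finset.sum_mul_sum]
    exact Finset.sum_congr rfl fun p _ => Finset.sum_congr rfl fun q _ => by ring
  rw [Finset.sum_congr rfl fun w _ => hsq w]
  rw [Finset.sum_comm]
  apply Finset.sum_congr rfl; intro p _
  rw [Finset.sum_comm]
  apply Finset.sum_congr rfl; intro q _
  rw [← Finset.mul_sum]
  congr 1
  exact prod_split (fun x => u p.1 x * u q.1 x) (fun y => u p.2 y * u q.2 y)

lemma binom_sum_le {m d : ℕ} (hdm : d ≤ m) :
    (∑ i ∈ Finset.range d, ((m.choose i : ℝ))) * ((3/4 : ℝ)^m * (1/3 : ℝ)^(d-1)) ≤ 1 := by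
  have hterm : ∀ i ∈ Finset.range d,
      (m.choose i : ℝ) * ((3/4 : ℝ)^m * (1/3 : ℝ)^(d-1))
        ≤ (1/4 : ℝ)^i * (3/4 : ℝ)^(m - i) * (m.choose i : ℝ) := by
    intro i hi
    rw [Finset.mem_range] at hi
    have heq : (1/4 : ℝ)^i * (3/4 : ℝ)^(m - i) = (3/4 : ℝ)^m * (1/3 : ℝ)^i := by
      have hmi : m = i + (m - i) := by omega
      calc (1/4 : ℝ)^i * (3/4 : ℝ)^(m - i)
          = ((3/4 : ℝ) * (1/3 : ℝ))^i * (3/4 : ℝ)^(m - i) := by norm_num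
        _ = (3/4 : ℝ)^i * (3/4 : ℝ)^(m-i) * (1/3 : ℝ)^i := by rw [mul_pow]; ring
        _ = (3/4 : ℝ)^m * (1/3 : ℝ)^i := by rw [← pow_add, ← hmi]
    rw [heq, mul_comm ((3/4 : ℝ)^m * (1/3 : ℝ)^i) _]
    apply mul_le_mul_of_nonneg_left _ (by positivity)
    apply mul_le_mul_of_nonneg_left _ (by positivity)
    apply pow_le_pow_of_le_one (by norm_num) (by norm_num)
    omega
  calc (∑ i ∈ Finset.range d, ((m.choose i : ℝ))) * ((3/4 : ℝ)^m * (1/3 : ℝ)^(d-1))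
      = ∑ i ∈ Finset.range d, (m.choose i : ℝ) * ((3/4 : ℝ)^m * (1/3 : ℝ)^(d-1)) :=
        Finset.sum_mul _ _ _
    _ ≤ ∑ i ∈ Finset.range d, (1/4 : ℝ)^i * (3/4 : ℝ)^(m - i) * (m.choose i : ℝ) :=
        Finset.sum_le_sum hterm
    _ ≤ ∑ i ∈ Finset.range (m+1), (1/4 : ℝ)^i * (3/4 : ℝ)^(m - i) * (m.choose i : ℝ) := by
        apply Finset.sum_le_sum_of_subset_of_nonneg
        · exact Finset.range_subset_range.2 (by omega)
        · intro i _ _; positivity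
    _ = 1 := by rw [← add_pow]; norm_num

lemma code_card_exp {m d N : ℕ} (hd : 0 < d) (hdm : d ≤ m)
    (h : 2 ^ m ≤ N * ∑ i ∈ Finset.range d, m.choose i) :
    Real.exp ((m:ℝ) * Real.log (3/2) - ((d : ℝ) - 1) * Real.log 3) ≤ (N : ℝ) := by
  have hVpos : (0:ℝ) < ∑ i ∈ Finset.range d, (m.choose i : ℝ) := by
    apply Finset.sum_pos' (fun i _ => by positivity)
    exact ⟨0, Finset.mem_range.2 hd, by simp⟩
  have hcast : (2:ℝ)^m ≤ (N : ℝ) * ∑ i ∈ Finset.range d, (m.choose i : ℝ) := by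
    have := h
    push_cast at *
    exact_mod_cast this
  have hw : (0:ℝ) < (3/4 : ℝ)^m * (1/3 : ℝ)^(d-1) := by positivity
  have hexp : Real.exp ((m:ℝ) * Real.log (3/2) - ((d : ℝ) - 1) * Real.log 3)
      = (2:ℝ)^m * ((3/4 : ℝ)^m * (1/3 : ℝ)^(d-1)) := by
    have hd1 : ((d : ℝ) - 1) = ((d - 1 : ℕ) : ℝ) := by
      push_cast [Nat.cast_sub hd]; ring
    rw [hd1, Real.exp_sub]
    rw [show ((m:ℝ)) * Real.log (3/2) = Real.log ((3/2 : ℝ)^m) by rw [Real.log_pow]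
      ,show (((d-1 : ℕ)):ℝ) * Real.log 3 = Real.log ((3:ℝ)^(d-1)) by rw [Real.log_pow]]
    rw [Real.exp_log (by positivity), Real.exp_log (by positivity)]
    symm
    rw [one_div, inv_pow, ← mul_assoc, ← mul_pow]
    norm_num
    exact (div_eq_mul_inv _ _).symm
  rw [hexp]
  have hb := binom_sum_le hdm
  -- N ≥ 2^m * ((3/4)^m * (1/3)^(d-1))
  have hNV : (2:ℝ)^m * ((3/4 : ℝ)^m * (1/3 : ℝ)^(d-1))
      ≤ (N : ℝ) * ((∑ i ∈ Finset.range d, (m.choose i : ℝ)) * ((3/4 : ℝ)^m * (1/3 : ℝ)^(d-1))) := by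
    nlinarith
  have hN0 : (0:ℝ) ≤ (N:ℝ) := Nat.cast_nonneg N
  nlinarith

lemma log_three_halves : (1/3 : ℝ) ≤ Real.log (3/2) := by
  rw [Real.le_log_iff_exp_le (by norm_num)]
  have h : (2/3 : ℝ) ≤ Real.exp (-(1/3)) := by
    have := Real.add_one_le_exp (-(1/3:ℝ)); linarith
  calc Real.exp (1/3 : ℝ) = (Real.exp (-(1/3:ℝ)))⁻¹ := by rw [← Real.exp_neg]; norm_num
    _ ≤ (2/3 : ℝ)⁻¹ := by
        apply inv_anti₀ (by norm_num) h
    _ = 3/2 := by norm_num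

lemma tri_ineq {α : Type*} [Fintype α] (f g h : α → ℝ) :
    Real.sqrt (∑ w, (f w - h w)^2)
      ≤ Real.sqrt (∑ w, (f w - g w)^2) + Real.sqrt (∑ w, (g w - h w)^2) := by
  have hd : ∀ (x y : α → ℝ), Real.sqrt (∑ w, (x w - y w)^2)
      = dist ((WithLp.equiv 2 (α → ℝ)).symm x) ((WithLp.equiv 2 (α → ℝ)).symm y) := by
    intro x y
    rw [EuclideanSpace.dist_eq]
    congr 1
    apply Finset.sum_congr rfl; intro w _
    change (x w - y w)^2 = dist (x w) (y w)^2
    rw [Real.dist_eq, sq_abs]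
  rw [hd, hd, hd]
  exact dist_triangle _ _ _

/-- there are universal constants `c, ε0 > 0` such that for every `n1 ≥ 2` with
`n = n1²`, the set `M(L_{2,n}) ∩ B₂(1)` contains an `ε0`-separated subset of cardinality at
least `exp(c (log n)²)`; in particular every `ε0`-covering of `M(L_{2,n}) ∩ B₂(1)` has
cardinality at least `exp(c (log n)²)`. -/
theorem stmt17 :
    ∃ c ε0 : ℝ, 0 < c ∧ 0 < ε0 ∧ ∀ n1 : ℕ, 2 ≤ n1 →
      (∃ S : Finset ((Fin 2 → Fin n1) → ℝ),
        (∀ θ ∈ S, θ ∈ monotoneCone2 n1 ∧ ∑ w, θ w ^ 2 ≤ 1) ∧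
        Real.exp (c * Real.log ((n1 ^ 2 : ℕ) : ℝ) ^ 2) ≤ (S.card : ℝ) ∧
        ∀ θ ∈ S, ∀ θ' ∈ S, θ ≠ θ' → ε0 ≤ Real.sqrt (∑ w, (θ w - θ' w) ^ 2)) ∧
      (∀ T : Finset ((Fin 2 → Fin n1) → ℝ),
        (∀ θ ∈ monotoneCone2 n1, (∑ w, θ w ^ 2 ≤ 1) →
          ∃ t ∈ T, Real.sqrt (∑ w, (θ w - t w) ^ 2) ≤ ε0) →
        Real.exp (c * Real.log ((n1 ^ 2 : ℕ) : ℝ) ^ 2) ≤ (T.card : ℝ)) := by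
  classical
  refine ⟨1/2000, 1/25, by norm_num, by norm_num, ?_⟩
  intro n1 hn1
  -- basic setup
  set k := Nat.log 256 n1 with hk
  set K := k + 1 with hKdef
  set M := K * K with hMdef
  have hM1 : 1 ≤ M := Nat.one_le_iff_ne_zero.2 (by positivity)
  set d := (M + 3) / 4 with hddef
  have hd0 : 0 < d := by omega
  have hdM : d ≤ M := by omega
  have h4d : M ≤ 4 * d ∧ 4 * d ≤ M + 3 := by omega
  -- the code
  obtain ⟨C, hCsep, hCcard⟩ := exists_code (ι := Fin K × Fin K) hd0
  have hcardι : Fintype.card (Fin K × Fin K) = M := by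
    simp [Fintype.card_prod, Fintype.card_fin, hMdef]
  rw [hcardι] at hCcard
  have hexpN : Real.exp ((M:ℝ) * Real.log (3/2) - ((d : ℝ) - 1) * Real.log 3)
      ≤ (C.card : ℝ) := code_card_exp hd0 hdM hCcard
  -- indicator system
  have hpow : ∀ i : Fin K, 256 ^ (i : ℕ) ≤ n1 := by
    intro i
    calc 256 ^ (i : ℕ) ≤ 256 ^ k :=
          Nat.pow_le_pow_right (by norm_num) (by omega)
      _ ≤ n1 := Nat.pow_log_le_self 256 (by omega)
  set G : (Fin K × Fin K) → (Fin K × Fin K) → ℝ := fun p q =>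
    ((16:ℝ)⁻¹) ^ (max (p.1 : ℕ) (q.1 : ℕ) - min (p.1 : ℕ) (q.1 : ℕ)) *
    ((16:ℝ)⁻¹) ^ (max (p.2 : ℕ) (q.2 : ℕ) - min (p.2 : ℕ) (q.2 : ℕ)) with hGdef
  have hGsym : ∀ p q, G p q = G q p := by
    intro p q; simp only [hGdef, max_comm, min_comm]
  have hGdiag : ∀ p, G p p = 1 := by
    intro p; simp [hGdef]
  have hGnn : ∀ p q, 0 ≤ G p q := by
    intro p q; positivity
  have hGrow : ∀ p, ∑ q, G p q ≤ 289/225 := by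
    intro p
    have hsplit : ∑ q : Fin K × Fin K, G p q
        = (∑ j : Fin K, ((16:ℝ)⁻¹) ^ (max (p.1 : ℕ) (j : ℕ) - min (p.1 : ℕ) (j : ℕ))) *
          (∑ j : Fin K, ((16:ℝ)⁻¹) ^ (max (p.2 : ℕ) (j : ℕ) - min (p.2 : ℕ) (j : ℕ))) := by
      rw [Fintype.sum_prod_type, Finset.sum_mul_sum]
    rw [hsplit]
    have h1 := row_sum_le p.1
    have h2 := row_sum_le p.2
    have hn1' : (0:ℝ) ≤ ∑ j : Fin K, ((16:ℝ)⁻¹) ^ (max (p.1 : ℕ) (j : ℕ) - min (p.1 : ℕ) (j : ℕ)) :=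
      Finset.sum_nonneg fun j _ => by positivity
    nlinarith
  -- the Gram identity
  have hG : ∀ p q : Fin K × Fin K,
      (∑ x, uu n1 p.1 x * uu n1 q.1 x) * (∑ y, uu n1 p.2 y * uu n1 q.2 y) = G p q := by
    intro p q
    rw [inner_uu hpow, inner_uu hpow]
  have hsq : ∀ a : Fin K × Fin K → ℝ,
      ∑ w : Fin 2 → Fin n1, (∑ p : Fin K × Fin K, a p * (uu n1 p.1 (w 0) * uu n1 p.2 (w 1)))^2
        = ∑ p, ∑ q, a p * a q * G p q := by
    intro a
    rw [sum_sq_expand (uu n1) a]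
    exact Finset.sum_congr rfl fun p _ => Finset.sum_congr rfl fun q _ => by rw [hG]
  -- scaling
  set s : ℝ := (3 * Real.sqrt M)⁻¹ with hsdef
  have hMR : (0:ℝ) < (M:ℝ) := by exact_mod_cast hM1
  have hsqM : Real.sqrt M > 0 := Real.sqrt_pos.2 hMR
  have hs2 : s^2 = ((9:ℝ) * M)⁻¹ := by
    rw [hsdef, inv_pow, mul_pow, Real.sq_sqrt hMR.le]
    norm_num
  -- coefficient vectors
  set cvec : ((Fin K × Fin K) → Bool) → (Fin K × Fin K) → ℝ :=
    fun b p => 1 + (if b p then 1 else 0) with hcvecdef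
  set θf : ((Fin K × Fin K) → Bool) → (Fin 2 → Fin n1) → ℝ := fun b w =>
    s * ∑ p : Fin K × Fin K, cvec b p * (uu n1 p.1 (w 0) * uu n1 p.2 (w 1)) with hθfdef
  -- sum of squares of θf
  have hnormsq : ∀ b, ∑ w : Fin 2 → Fin n1, (θf b w)^2
      = s^2 * ∑ p, ∑ q, cvec b p * cvec b q * G p q := by
    intro b
    simp only [hθfdef, mul_pow]
    rw [← Finset.mul_sum, hsq]
  -- norm bound
  have hnorm : ∀ b, ∑ w : Fin 2 → Fin n1, (θf b w)^2 ≤ 1 := by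
    intro b
    rw [hnormsq b, hs2]
    have hub := (quad_bounds G hGsym hGdiag hGnn hGrow (cvec b)).2
    have hc4 : ∑ p : Fin K × Fin K, (cvec b p)^2 ≤ 4 * M := by
      calc ∑ p : Fin K × Fin K, (cvec b p)^2
          ≤ ∑ p : Fin K × Fin K, 4 := by
            apply Finset.sum_le_sum
            intro p _
            simp only [hcvecdef]
            split <;> norm_num
        _ = 4 * M := by
            rw [Finset.sum_const, Finset.card_univ, hcardι, nsmul_eq_mul]
            ring
    have hQub : ∑ p, ∑ q, cvec b p * cvec b q * G p q ≤ (289/225) * (4 * M) := by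
      calc ∑ p, ∑ q, cvec b p * cvec b q * G p q
          ≤ (289/225) * ∑ p, (cvec b p)^2 := hub
        _ ≤ (289/225) * (4 * M) := by linarith
    rw [inv_mul_le_iff₀ (by positivity)]
    calc ∑ p, ∑ q, cvec b p * cvec b q * G p q ≤ (289/225) * (4 * M) := hQub
      _ ≤ 9 * M * 1 := by nlinarith
  -- separation bound
  have hsep : ∀ b ∈ C, ∀ b' ∈ C, b ≠ b' →
      (1/64 : ℝ) ≤ ∑ w : Fin 2 → Fin n1, (θf b w - θf b' w)^2 := by
    intro b hb b' hb' hbb'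
    have hdiff : ∀ w, θf b w - θf b' w
        = s * ∑ p : Fin K × Fin K, (cvec b p - cvec b' p) * (uu n1 p.1 (w 0) * uu n1 p.2 (w 1)) := by
      intro w
      simp only [hθfdef]
      rw [← mul_sub, ← Finset.sum_sub_distrib]
      congr 1
      exact Finset.sum_congr rfl fun p _ => by ring
    have hsum : ∑ w : Fin 2 → Fin n1, (θf b w - θf b' w)^2
        = s^2 * ∑ p, ∑ q, (cvec b p - cvec b' p) * (cvec b q - cvec b' q) * G p q := by
      rw [Finset.sum_congr rfl fun w _ => by rw [hdiff w]]
      simp only [mul_pow]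
      rw [← Finset.mul_sum, hsq]
    have hlb := (quad_bounds G hGsym hGdiag hGnn hGrow (fun p => cvec b p - cvec b' p)).1
    have hham : ∑ p : Fin K × Fin K, (cvec b p - cvec b' p)^2 = (hammingDist b b' : ℝ) := by
      have hterm : ∀ p, (cvec b p - cvec b' p)^2 = if b p ≠ b' p then (1:ℝ) else 0 := by
        intro p
        by_cases h1 : b p <;> by_cases h2 : b' p <;> simp [hcvecdef, h1, h2]
      rw [Finset.sum_congr rfl fun p _ => hterm p, Finset.sum_boole]
      congr 1
    have hdge : (d : ℝ) ≤ (hammingDist b b' : ℝ) := by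
      exact_mod_cast hCsep b hb b' hb' hbb'
    have hMd : (M : ℝ) ≤ 4 * d := by exact_mod_cast h4d.1
    rw [hsum, hs2]
    have hkey : (161/225 : ℝ) * ((M:ℝ)/4)
        ≤ ∑ p, ∑ q, (cvec b p - cvec b' p) * (cvec b q - cvec b' q) * G p q := by
      calc (161/225 : ℝ) * ((M:ℝ)/4) ≤ (161/225) * (hammingDist b b' : ℝ) := by
            nlinarith
        _ = (2 - 289/225) * ∑ p : Fin K × Fin K, (cvec b p - cvec b' p)^2 := by
            rw [hham]; norm_num
        _ ≤ _ := hlb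
    rw [inv_mul_eq_div, le_div_iff₀ (by positivity)]
    calc (1/64 : ℝ) * (9 * M) ≤ (161/225) * (M/4) := by nlinarith
      _ ≤ _ := hkey
  -- monotonicity
  have hmono : ∀ b, θf b ∈ monotoneCone2 n1 := by
    intro b x y hxy
    simp only [hθfdef]
    apply mul_le_mul_of_nonneg_left _ (by positivity)
    apply Finset.sum_le_sum
    intro p _
    apply mul_le_mul_of_nonneg_left _ (by simp only [hcvecdef]; split <;> norm_num)
    have hx0 : x 0 ≤ y 0 := hxy 0
    have hx1 : x 1 ≤ y 1 := hxy 1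
    exact mul_le_mul (uu_mono n1 p.1 hx0) (uu_mono n1 p.2 hx1)
      (uu_nonneg n1 p.2 (x 1)) (uu_nonneg n1 p.1 (y 0))
  -- separation in sqrt form
  set S : Finset ((Fin 2 → Fin n1) → ℝ) := C.image θf with hSdef
  have hinj : Set.InjOn θf C := by
    intro b hb b' hb' heq
    by_contra hne
    have := hsep b hb b' hb' hne
    rw [heq] at this
    simp at this
    linarith
  have hScard : S.card = C.card := Finset.card_image_of_injOn hinj
  have hsepS : ∀ θ ∈ S, ∀ θ' ∈ S, θ ≠ θ' → (1/8 : ℝ) ≤ Real.sqrt (∑ w, (θ w - θ' w)^2) := by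
    intro θ hθ θ' hθ' hne
    obtain ⟨b, hb, rfl⟩ := Finset.mem_image.1 hθ
    obtain ⟨b', hb', rfl⟩ := Finset.mem_image.1 hθ'
    have hbb' : b ≠ b' := fun h => hne (by rw [h])
    have h := hsep b hb b' hb' hbb'
    rw [show (1/8 : ℝ) = Real.sqrt (1/64) by
      rw [show (1/64 : ℝ) = (1/8)^2 by norm_num, Real.sqrt_sq (by norm_num)]]
    exact Real.sqrt_le_sqrt h
  -- the exponential bound
  have hexpS : Real.exp ((1/2000 : ℝ) * Real.log ((n1 ^ 2 : ℕ) : ℝ) ^ 2) ≤ (S.card : ℝ) := by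
    rw [hScard]
    refine le_trans ?_ hexpN
    rw [Real.exp_le_exp]
    have hLle : Real.log n1 ≤ (K : ℝ) * (8 * Real.log 2) := by
      have hlt : (n1 : ℝ) ≤ (256 : ℝ) ^ K := by
        exact_mod_cast (Nat.lt_pow_succ_log_self (by norm_num) n1).le
      calc Real.log n1 ≤ Real.log ((256:ℝ)^K) :=
            Real.log_le_log (by positivity) hlt
        _ = (K : ℝ) * (8 * Real.log 2) := by
            rw [show (256:ℝ) = 2^8 by norm_num, ← pow_mul, Real.log_pow]
            push_cast; ring
    have hL0 : 0 ≤ Real.log n1 := Real.log_nonneg (by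
      have h1n : (1:ℕ) ≤ n1 := by omega
      exact_mod_cast h1n)
    have hlogcast : Real.log ((n1 ^ 2 : ℕ) : ℝ) = 2 * Real.log n1 := by
      push_cast
      rw [Real.log_pow]
      push_cast; ring
    rw [hlogcast]
    have hMK : (M : ℝ) = (K:ℝ) * (K:ℝ) := by exact_mod_cast rfl
    have hL2 : (Real.log n1)^2 ≤ (M:ℝ) * 64 * (Real.log 2)^2 := by
      rw [hMK]
      nlinarith [hLle, hL0, Real.log_nonneg (by norm_num : (1:ℝ) ≤ 2), sq_nonneg ((K:ℝ) * (8 * Real.log 2) - Real.log n1)]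
    have hd1 : ((d:ℝ) - 1) ≤ (M:ℝ)/4 := by
      have h1 : (4 * d : ℝ) ≤ (M:ℝ) + 3 := by exact_mod_cast h4d.2
      linarith
    have hd1nn : (0:ℝ) ≤ (d:ℝ) - 1 := by
      have : (1:ℝ) ≤ (d:ℝ) := by exact_mod_cast hd0
      linarith
    have hlog3 : Real.log 3 = Real.log 2 + Real.log (3/2) := by
      rw [← Real.log_mul (by norm_num) (by norm_num)]
      norm_num
    have hl2ub : Real.log 2 < 0.6931471808 := Real.log_two_lt_d9
    have hl2lb : (0.6931471803 : ℝ) < Real.log 2 := Real.log_two_gt_d9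
    have hl32 := log_three_halves
    have hl32ub : Real.log (3/2) ≤ Real.log 2 := Real.log_le_log (by norm_num) (by norm_num)
    have hlog3nn : (0:ℝ) ≤ Real.log 3 := Real.log_nonneg (by norm_num)
    have hrhs : (M:ℝ) * ((1 - Real.log 2)/4) ≤ (M:ℝ) * Real.log (3/2) - ((d:ℝ) - 1) * Real.log 3 := by
      have h1 : ((d:ℝ) - 1) * Real.log 3 ≤ ((M:ℝ)/4) * Real.log 3 :=
        mul_le_mul_of_nonneg_right hd1 hlog3nn
      rw [hlog3]
      nlinarith
    have hlhs : (1/2000 : ℝ) * (2 * Real.log n1)^2 ≤ (M:ℝ) * ((1 - Real.log 2)/4) := by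
      have h1 : (1/2000 : ℝ) * (2 * Real.log n1)^2 ≤ (1/2000) * (4 * ((M:ℝ) * 64 * (Real.log 2)^2)) := by
        nlinarith
      refine h1.trans ?_
      have : (0:ℝ) ≤ (M:ℝ) := le_of_lt hMR
      nlinarith
    linarith
  constructor
  · -- part 1
    refine ⟨S, ?_, hexpS, ?_⟩
    · intro θ hθ
      obtain ⟨b, hb, rfl⟩ := Finset.mem_image.1 hθ
      exact ⟨hmono b, hnorm b⟩
    · intro θ hθ θ' hθ' hne
      refine le_trans (by norm_num) (hsepS θ hθ θ' hθ' hne)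
  · -- part 2 : covering bound
    intro T hT
    refine le_trans hexpS ?_
    have hcard : S.card ≤ T.card := by
      have hmap : ∀ θ ∈ S, ∃ t ∈ T, Real.sqrt (∑ w, (θ w - t w)^2) ≤ 1/25 := by
        intro θ hθ
        obtain ⟨b, hb, rfl⟩ := Finset.mem_image.1 hθ
        exact hT (θf b) (hmono b) (hnorm b)
      set f : ((Fin 2 → Fin n1) → ℝ) → ((Fin 2 → Fin n1) → ℝ) := fun θ =>
        if h : ∃ t ∈ T, Real.sqrt (∑ w, (θ w - t w)^2) ≤ 1/25 then h.choose else θ with hfdef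
      have hfT : ∀ θ ∈ S, f θ ∈ T ∧ Real.sqrt (∑ w, (θ w - f θ w)^2) ≤ 1/25 := by
        intro θ hθ
        have h := hmap θ hθ
        simp only [hfdef, dif_pos h]
        exact ⟨h.choose_spec.1, h.choose_spec.2⟩
      apply Finset.card_le_card_of_injOn f (fun θ hθ => (hfT θ hθ).1)
      intro θ hθ θ' hθ' heq
      by_contra hne
      have h1 := (hfT θ hθ).2
      have h2 := (hfT θ' hθ').2
      rw [heq] at h1
      have htri := tri_ineq θ (f θ') θ'
      have h2' : Real.sqrt (∑ w, (f θ' w - θ' w)^2) ≤ 1/25 := by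
        have hsymm : (∑ w, (f θ' w - θ' w)^2) = ∑ w, (θ' w - f θ' w)^2 :=
          Finset.sum_congr rfl fun w _ => by ring
        rw [hsymm]
        exact h2
      have hlow := hsepS θ hθ θ' hθ' hne
      linarith
    calc (S.card : ℝ) ≤ (T.card : ℝ) := by exact_mod_cast hcard
      _ = _ := rfl

end
end
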